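/- arXiv:2401.16510 — 6 statements merged into one kernel-verified Lean document; each statement's English description precedes it below -/
import Mathlib

section
/- For every k ∈ (0,1), the derivative of the complete elliptic integral of the first kind satisfies k · dK/dk(k) = E(k)/(1-k²) - K(k). -/
open Real Set Filter MeasureTheory
open intervalIntegral

-- integrability of 1/sqrt(1-s^2) on [0,1]
lemma aux_int_base : IntervalIntegrable (fun s : ℝ => 1 / Real.sqrt (1 - s^2)) volume 0 1 := by
  have h1 : IntervalIntegrable (fun x : ℝ => x ^ (-(1/2) : ℝ)) volume 0 1 :=
    intervalIntegrable_rpow' (by norm_num)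
  have h2 : IntervalIntegrable (fun x : ℝ => (1 - x) ^ (-(1/2) : ℝ)) volume 0 1 := by
    simpa using (h1.comp_sub_left 1).symm
  apply h2.mono_fun
  · exact (measurable_const.div ((continuous_const.sub (continuous_pow 2)).sqrt.measurable)).aestronglyMeasurable
  · rw [Filter.EventuallyLE, ae_restrict_iff' measurableSet_uIoc]
    filter_upwards with s hs
    rw [uIoc_of_le (by norm_num : (0:ℝ) ≤ 1)] at hs
    obtain ⟨hs0, hs1⟩ := hs
    have h1s : (0:ℝ) ≤ 1 - s := by linarith
    have heq : (1 - s) ^ (-(1/2) : ℝ) = 1 / Real.sqrt (1 - s) := by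
      rw [Real.rpow_neg h1s, Real.sqrt_eq_rpow, one_div]
      norm_num
    have hle : 1 / Real.sqrt (1 - s^2) ≤ 1 / Real.sqrt (1 - s) := by
      rcases eq_or_lt_of_le hs1 with h | h
      · subst h
        simp
      · have hpos : 0 < Real.sqrt (1 - s) := Real.sqrt_pos.2 (by linarith)
        apply one_div_le_one_div_of_le hpos
        apply Real.sqrt_le_sqrt
        nlinarith
    have h01 : 0 ≤ 1 / Real.sqrt (1 - s^2) := by positivity
    have h02 : 0 ≤ (1 - s) ^ (-(1/2) : ℝ) := by positivity
    rw [Real.norm_eq_abs, Real.norm_eq_abs, abs_of_nonneg h01, abs_of_nonneg h02, heq]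
    exact hle

-- integrability of the K integrand
lemma aux_int_K {k : ℝ} (hk1 : k < 1) (hk1' : -1 < k) :
    IntervalIntegrable (fun s : ℝ => 1 / Real.sqrt ((1 - s^2) * (1 - k^2 * s^2))) volume 0 1 := by
  have hkk : k^2 < 1 := by nlinarith
  apply (aux_int_base.const_mul (1 / Real.sqrt (1 - k^2))).mono_fun'
  · exact (measurable_const.div
      (((continuous_const.sub (continuous_pow 2)).mul
        (continuous_const.sub (continuous_const.mul (continuous_pow 2)))).sqrt.measurable)).aestronglyMeasurable
  · rw [Filter.EventuallyLE, ae_restrict_iff' measurableSet_uIoc]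
    filter_upwards with s hs
    rw [uIoc_of_le (by norm_num : (0:ℝ) ≤ 1)] at hs
    obtain ⟨hs0, hs1⟩ := hs
    have h1s : (0:ℝ) ≤ 1 - s^2 := by nlinarith
    have hb : 0 < 1 - k^2 := by linarith
    have hbs : 1 - k^2 ≤ 1 - k^2 * s^2 := by nlinarith
    have hnn : (0:ℝ) ≤ 1 / Real.sqrt ((1 - s^2) * (1 - k^2 * s^2)) := by positivity
    rw [Real.norm_eq_abs, abs_of_nonneg hnn]
    rw [Real.sqrt_mul h1s]
    rcases eq_or_lt_of_le h1s with h | h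
    · rw [← h]
      simp
    · have ha : 0 < Real.sqrt (1 - s^2) := Real.sqrt_pos.2 h
      have hc : 0 < Real.sqrt (1 - k^2) := Real.sqrt_pos.2 hb
      have key : (1:ℝ)/(Real.sqrt (1-s^2) * Real.sqrt (1-k^2*s^2))
          ≤ 1/(Real.sqrt (1-s^2) * Real.sqrt (1-k^2)) := by
        apply one_div_le_one_div_of_le (by positivity)
        exact mul_le_mul_of_nonneg_left (Real.sqrt_le_sqrt hbs) ha.le
      have e : (1:ℝ)/(Real.sqrt (1-s^2) * Real.sqrt (1-k^2))
          = 1/Real.sqrt (1-k^2) * (1/Real.sqrt (1-s^2)) := by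
        field_simp
      linarith [key, e.ge]

-- integrability of the E integrand
lemma aux_int_E {k : ℝ} :
    IntervalIntegrable (fun s : ℝ => Real.sqrt (1 - k^2 * s^2) / Real.sqrt (1 - s^2)) volume 0 1 := by
  apply aux_int_base.mono_fun'
  · exact ((continuous_const.sub (continuous_const.mul (continuous_pow 2))).sqrt.measurable.div
      (continuous_const.sub (continuous_pow 2)).sqrt.measurable).aestronglyMeasurable
  · rw [Filter.EventuallyLE, ae_restrict_iff' measurableSet_uIoc]
    filter_upwards with s _
    have hnn : (0:ℝ) ≤ Real.sqrt (1 - k^2 * s^2) / Real.sqrt (1 - s^2) := by positivity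
    rw [Real.norm_eq_abs, abs_of_nonneg hnn]
    apply div_le_div_of_nonneg_right _ (Real.sqrt_nonneg _)
    exact Real.sqrt_le_one.mpr (by nlinarith [sq_nonneg (k*s)])

noncomputable def Fd (x s : ℝ) : ℝ := x * s^2 * (1 - s^2) / (Real.sqrt ((1 - s^2) * (1 - x^2 * s^2)))^3

lemma aux_hasDeriv {k : ℝ} (hk : k ∈ Set.Ioo (0:ℝ) 1) :
    IntervalIntegrable (Fd k) volume 0 1 ∧
    HasDerivAt (fun x : ℝ => ∫ s in (0:ℝ)..1, 1 / Real.sqrt ((1 - s^2) * (1 - x^2 * s^2)))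
      (∫ s in (0:ℝ)..1, Fd k s) k := by
  obtain ⟨hk0, hk1⟩ := hk
  set ε : ℝ := min k (1 - k) / 2 with hε
  have hε0 : 0 < ε := by
    have := lt_min hk0 (by linarith : (0:ℝ) < 1 - k)
    positivity
  set k₁ : ℝ := (1 + k) / 2 with hk₁
  have hk₁1 : k₁ < 1 := by rw [hk₁]; linarith
  have hk₁0 : 0 < k₁ := by rw [hk₁]; linarith
  have hball : ∀ x ∈ Metric.ball k ε, 0 < x ∧ x < k₁ := by
    intro x hx
    rw [Metric.mem_ball, Real.dist_eq, abs_lt] at hx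
    constructor
    · have : ε ≤ k / 2 := by
        rw [hε]; have := min_le_left k (1 - k); linarith
      linarith
    · have : ε ≤ (1 - k) / 2 := by
        rw [hε]; have := min_le_right k (1 - k); linarith
      rw [hk₁]; linarith
  have hmeas : ∀ x : ℝ, AEStronglyMeasurable
      (fun s : ℝ => 1 / Real.sqrt ((1 - s^2) * (1 - x^2 * s^2))) (volume.restrict (Set.uIoc (0:ℝ) 1)) :=
    fun x => (measurable_const.div
      (((continuous_const.sub (continuous_pow 2)).mul
        (continuous_const.sub (continuous_const.mul (continuous_pow 2)))).sqrt.measurable)).aestronglyMeasurable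
  have hmeas' : AEStronglyMeasurable (Fd k) (volume.restrict (Set.uIoc (0:ℝ) 1)) := by
    apply Measurable.aestronglyMeasurable
    apply Measurable.div
    · exact (((continuous_const.mul (continuous_pow 2)).mul
        (continuous_const.sub (continuous_pow 2)))).measurable
    · exact ((((continuous_const.sub (continuous_pow 2)).mul
        (continuous_const.sub (continuous_const.mul (continuous_pow 2)))).sqrt).pow 3).measurable
  have hc₁ : 0 < 1 - k₁^2 := by nlinarith
  have hne1 : ∀ᵐ t : ℝ ∂volume, t ≠ (1:ℝ) := by
    rw [ae_iff]
    convert Real.volume_singleton (a := (1:ℝ)) using 2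
    ext x; simp
  refine intervalIntegral.hasDerivAt_integral_of_dominated_loc_of_deriv_le (F := fun x s =>
      1 / Real.sqrt ((1 - s^2) * (1 - x^2 * s^2))) (F' := Fd)
      (bound := fun t => (1 / Real.sqrt (1 - k₁^2))^3 * (1 / Real.sqrt (1 - t^2)))
      (Metric.ball_mem_nhds k hε0) (Eventually.of_forall hmeas) (aux_int_K hk1 (by linarith)) hmeas' ?_ ?_ ?_
  · -- bound
    filter_upwards [hne1] with t ht1
    intro ht x hxball
    rw [uIoc_of_le (by norm_num : (0:ℝ) ≤ 1)] at ht
    obtain ⟨hx0, hx1⟩ := hball x hxball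
    have ht0 : 0 < t := ht.1
    have ht1' : t < 1 := lt_of_le_of_ne ht.2 ht1
    have h1t : 0 < 1 - t^2 := by nlinarith
    have h1xt : 0 < 1 - x^2 * t^2 := by nlinarith
    have hbnd : 1 - k₁^2 ≤ 1 - x^2 * t^2 := by nlinarith
    have hFd : Fd x t = x * t^2 * (1 - t^2) / (Real.sqrt ((1 - t^2) * (1 - x^2 * t^2)))^3 := rfl
    have hnn : 0 ≤ Fd x t := by rw [hFd]; positivity
    rw [Real.norm_eq_abs, abs_of_nonneg hnn, hFd]
    rw [Real.sqrt_mul h1t.le, mul_pow]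
    have hsa : 0 < Real.sqrt (1 - t^2) := Real.sqrt_pos.2 h1t
    have hsb : 0 < Real.sqrt (1 - x^2*t^2) := Real.sqrt_pos.2 h1xt
    have hsc : 0 < Real.sqrt (1 - k₁^2) := Real.sqrt_pos.2 hc₁
    have hsq : Real.sqrt (1 - t^2)^2 = 1 - t^2 := Real.sq_sqrt h1t.le
    have hcb : Real.sqrt (1 - k₁^2) ≤ Real.sqrt (1 - x^2*t^2) := Real.sqrt_le_sqrt hbnd
    rw [div_le_iff₀ (by positivity)]
    have hxle : x * t^2 ≤ 1 := by nlinarith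
    have h2gen : ∀ A B c : ℝ, A ≠ 0 → c ≠ 0 →
        ((1/c)^3*(1/A))*(A^3*B^3) = A^2*(B^3/c^3) := by
      intro A B c hA hc
      field_simp
    have h2 : ((1/Real.sqrt (1-k₁^2))^3 * (1/Real.sqrt (1-t^2))) *
        (Real.sqrt (1-t^2)^3 * Real.sqrt (1-x^2*t^2)^3)
        = Real.sqrt (1-t^2)^2 * (Real.sqrt (1-x^2*t^2)^3/Real.sqrt (1-k₁^2)^3) :=
      h2gen _ _ _ hsa.ne' hsc.ne'
    rw [mul_comm ((1 / Real.sqrt (1 - k₁ ^ 2)) ^ 3 * (1 / Real.sqrt (1 - t ^ 2))) _] at h2 ⊢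
    rw [h2, hsq]
    have hge1 : 1 ≤ Real.sqrt (1-x^2*t^2)^3 / Real.sqrt (1-k₁^2)^3 := by
      rw [le_div_iff₀ (by positivity)]
      simpa using pow_le_pow_left₀ hsc.le hcb 3
    nlinarith [mul_nonneg h1t.le (sub_nonneg.2 hge1), mul_nonneg h1t.le (sub_nonneg.2 hxle)]
  · exact (aux_int_base.const_mul _)
  · -- differentiability
    filter_upwards [hne1] with t ht1
    intro ht x hxball
    rw [uIoc_of_le (by norm_num : (0:ℝ) ≤ 1)] at ht
    obtain ⟨hx0, hx1⟩ := hball x hxball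
    have ht0 : 0 < t := ht.1
    have ht1' : t < 1 := lt_of_le_of_ne ht.2 ht1
    have h1t : 0 < 1 - t^2 := by nlinarith
    have h1xt : 0 < 1 - x^2 * t^2 := by nlinarith
    have hu : HasDerivAt (fun x : ℝ => (1 - t^2) * (1 - x^2 * t^2))
        ((1 - t^2) * (-(2 * x * t^2))) x := by
      have h1 : HasDerivAt (fun x : ℝ => 1 - x^2 * t^2) (-(2 * x * t^2)) x := by
        simpa using ((hasDerivAt_pow 2 x).mul_const (t^2)).const_sub 1
      exact h1.const_mul _
    have hupos : 0 < (1 - t^2) * (1 - x^2 * t^2) := mul_pos h1t h1xt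
    have hsq : HasDerivAt (fun x : ℝ => Real.sqrt ((1 - t^2) * (1 - x^2 * t^2)))
        (1 / (2 * Real.sqrt ((1 - t^2) * (1 - x^2 * t^2))) * ((1 - t^2) * (-(2 * x * t^2)))) x :=
      (Real.hasDerivAt_sqrt hupos.ne').comp x hu
    have hsp : 0 < Real.sqrt ((1 - t^2) * (1 - x^2 * t^2)) := Real.sqrt_pos.2 hupos
    have hdiv := (hasDerivAt_const x (1:ℝ)).div hsq hsp.ne'
    convert hdiv using 1
    have hs2 : Real.sqrt ((1 - t^2) * (1 - x^2 * t^2))^2 = (1 - t^2) * (1 - x^2 * t^2) :=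
      Real.sq_sqrt hupos.le
    show Fd x t = _
    rw [Fd]
    field_simp
    ring_nf
    · rfl
    · rfl

lemma aux_alg (a b s k : ℝ) (ha : a ≠ 0) (hb : b ≠ 0) (hk : (1:ℝ)-k^2 ≠ 0)
    (ha2 : a^2 = 1-s^2) (hb2 : b^2 = 1-k^2*s^2) :
    k * (k*s^2*(1-s^2)/(a*b)^3) - (b/a/(1-k^2) - 1/(a*b)) =
    -(k^2/(1-k^2)) * (((1*a + s*(1/(2*a)*(-(2*s))))*b - s*a*(1/(2*b)*(-(k^2*(2*s)))))/b^2) := by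
  rw [← ha2]
  field_simp
  rw [ha2, hb2]; ring

lemma aux_ftc {k : ℝ} (hk : k ∈ Set.Ioo (0:ℝ) 1) :
    ∫ s in (0:ℝ)..1, (k * Fd k s -
      (Real.sqrt (1 - k^2 * s^2) / Real.sqrt (1 - s^2) / (1 - k^2)
        - 1 / Real.sqrt ((1 - s^2) * (1 - k^2 * s^2)))) = 0 := by
  obtain ⟨hk0, hk1⟩ := hk
  have hkk : 0 < 1 - k^2 := by nlinarith
  set g : ℝ → ℝ := fun s => -(k^2/(1-k^2)) * (s * Real.sqrt (1 - s^2) / Real.sqrt (1 - k^2*s^2))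
    with hg
  have hbpos : ∀ s : ℝ, s ∈ Icc (0:ℝ) 1 → 0 < 1 - k^2*s^2 := by
    intro s hs
    have h1 : s^2 ≤ 1 := by nlinarith [hs.1, hs.2]
    have h2 : k^2*s^2 ≤ k^2 := by nlinarith [sq_nonneg k]
    nlinarith
  have hcont : ContinuousOn g (Icc 0 1) := by
    apply ContinuousOn.mul continuousOn_const
    apply ContinuousOn.div
    · exact (continuous_id.mul (continuous_const.sub (continuous_pow 2)).sqrt).continuousOn
    · exact (continuous_const.sub (continuous_const.mul (continuous_pow 2))).sqrt.continuousOn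
    · intro s hs
      exact (Real.sqrt_pos.2 (hbpos s hs)).ne'
  have hderiv : ∀ s ∈ Ioo (0:ℝ) 1, HasDerivAt g
      (k * Fd k s - (Real.sqrt (1 - k^2 * s^2) / Real.sqrt (1 - s^2) / (1 - k^2)
        - 1 / Real.sqrt ((1 - s^2) * (1 - k^2 * s^2)))) s := by
    intro s hs
    obtain ⟨hs0, hs1⟩ := hs
    have h1s : 0 < 1 - s^2 := by nlinarith
    have h1ks : 0 < 1 - k^2*s^2 := by nlinarith
    have hapos : 0 < Real.sqrt (1 - s^2) := Real.sqrt_pos.2 h1s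
    have hbpos' : 0 < Real.sqrt (1 - k^2*s^2) := Real.sqrt_pos.2 h1ks
    have ha2 : Real.sqrt (1 - s^2)^2 = 1 - s^2 := Real.sq_sqrt h1s.le
    have hb2 : Real.sqrt (1 - k^2*s^2)^2 = 1 - k^2*s^2 := Real.sq_sqrt h1ks.le
    have ha : HasDerivAt (fun s : ℝ => Real.sqrt (1 - s^2))
        (1/(2*Real.sqrt (1 - s^2)) * (-(2*s))) s := by
      refine (Real.hasDerivAt_sqrt h1s.ne').comp s ?_
      simpa using (hasDerivAt_pow 2 s).const_sub 1
    have hb : HasDerivAt (fun s : ℝ => Real.sqrt (1 - k^2*s^2))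
        (1/(2*Real.sqrt (1 - k^2*s^2)) * (-(k^2*(2*s)))) s := by
      refine (Real.hasDerivAt_sqrt h1ks.ne').comp s ?_
      have := ((hasDerivAt_pow 2 s).const_mul (k^2)).const_sub 1
      simpa [mul_comm] using this
    have hnum : HasDerivAt (fun s : ℝ => s * Real.sqrt (1 - s^2))
        (1 * Real.sqrt (1 - s^2) + s * (1/(2*Real.sqrt (1 - s^2)) * (-(2*s)))) s :=
      (hasDerivAt_id s).mul ha
    have hq := (hnum.div hb hbpos'.ne')
    have hgd := hq.const_mul (-(k^2/(1-k^2)))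
    convert hgd using 1
    · rfl
    · rfl
    · rfl
    unfold Fd
    rw [Real.sqrt_mul h1s.le]
    exact aux_alg (Real.sqrt (1-s^2)) (Real.sqrt (1-k^2*s^2)) s k hapos.ne' hbpos'.ne'
      hkk.ne' ha2 hb2
  have hint : IntervalIntegrable (fun s : ℝ => k * Fd k s -
      (Real.sqrt (1 - k^2 * s^2) / Real.sqrt (1 - s^2) / (1 - k^2)
        - 1 / Real.sqrt ((1 - s^2) * (1 - k^2 * s^2)))) volume 0 1 := by
    refine IntervalIntegrable.sub ?_ ?_
    · exact ((aux_hasDeriv ⟨hk0, hk1⟩).1).const_mul k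
    · exact (aux_int_E.div_const (1-k^2)).sub (aux_int_K hk1 (by linarith))
  have := intervalIntegral.integral_eq_sub_of_hasDeriv_right_of_le (by norm_num : (0:ℝ) ≤ 1)
    hcont (fun s hs => (hderiv s hs).hasDerivWithinAt) hint
  rw [this, hg]
  norm_num

theorem stmt2 (k : ℝ) (hk : k ∈ Set.Ioo (0:ℝ) 1) :
    k * deriv (fun k : ℝ => ∫ s in (0:ℝ)..1, 1 / Real.sqrt ((1 - s^2) * (1 - k^2 * s^2))) k
      = (∫ s in (0:ℝ)..1, Real.sqrt (1 - k^2 * s^2) / Real.sqrt (1 - s^2)) / (1 - k^2)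
        - ∫ s in (0:ℝ)..1, 1 / Real.sqrt ((1 - s^2) * (1 - k^2 * s^2)) := by
  have hd := aux_hasDeriv hk
  rw [hd.2.deriv]
  have h0 := aux_ftc hk
  have hint1 : IntervalIntegrable (fun s : ℝ => k * Fd k s) volume 0 1 := hd.1.const_mul k
  have hint2 := (aux_int_E (k := k)).div_const (1 - k^2)
  have hint3 := aux_int_K hk.2 (by linarith [hk.1] : (-1:ℝ) < k)
  rw [intervalIntegral.integral_sub hint1 (hint2.sub hint3),
    intervalIntegral.integral_sub hint2 hint3,
    intervalIntegral.integral_const_mul, intervalIntegral.integral_div] at h0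
  linarith [h0]
end

section
/- Let 0 < a₀ < a₁ < a₂ and define κ := (a₂² - a₀a₁)/(a₂(a₂-a₀)(a₂-a₁)). Then ∫_{a₀}^{a₁} √t · (2 - κ(a₂ - t)) / (√((t-a₀)(a₁-t)) · (a₂-t)²) dt > 0. -/
open Real Set Filter MeasureTheory

open intervalIntegral

private lemma aux_half_left {a b m : ℝ} (hab : a < m) (hmb : m < b) {q : ℝ → ℝ}
    (hq : ContinuousOn q (Icc a b)) :
    IntervalIntegrable (fun t => q t / Real.sqrt ((t - a) * (b - t))) volume a m := by
  obtain ⟨M, hM⟩ := isCompact_Icc.exists_bound_of_continuousOn hq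
  have hbm : 0 < b - m := by linarith
  set C : ℝ := (max M 0) / Real.sqrt (b - m) with hC
  have hCnn : 0 ≤ C := div_nonneg (le_max_right _ _) (Real.sqrt_nonneg _)
  have hdom : IntervalIntegrable (fun t => C * (t - a) ^ (-(1/2) : ℝ)) volume a m := by
    have h1 : IntervalIntegrable (fun x : ℝ => x ^ (-(1/2) : ℝ)) volume 0 (m - a) :=
      intervalIntegral.intervalIntegrable_rpow' (by norm_num)
    have h2 := h1.comp_sub_right a
    simp only [zero_add, sub_add_cancel] at h2
    exact h2.const_mul C
  refine hdom.mono_fun ?_ ?_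
  · have hcont : ContinuousOn (fun t => q t / Real.sqrt ((t - a) * (b - t))) (Ioc a m) := by
      apply ContinuousOn.div
      · exact hq.mono (fun x hx => ⟨le_of_lt hx.1, le_trans hx.2 (le_of_lt hmb)⟩)
      · fun_prop
      · intro x hx
        exact ne_of_gt (Real.sqrt_pos.2 (mul_pos (by linarith [hx.1]) (by linarith [hx.2])))
    rw [uIoc_of_le hab.le]
    exact hcont.aestronglyMeasurable measurableSet_Ioc
  · rw [uIoc_of_le hab.le, EventuallyLE, ae_restrict_iff' measurableSet_Ioc]
    filter_upwards with t ht
    have hta : 0 < t - a := by linarith [ht.1]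
    have hsq : Real.sqrt (t - a) * Real.sqrt (b - m) ≤ Real.sqrt ((t - a) * (b - t)) := by
      rw [← Real.sqrt_mul hta.le]
      exact Real.sqrt_le_sqrt (by nlinarith [ht.2])
    have hpos : 0 < Real.sqrt (t - a) * Real.sqrt (b - m) :=
      mul_pos (Real.sqrt_pos.2 hta) (Real.sqrt_pos.2 hbm)
    have hqt : |q t| ≤ max M 0 :=
      le_trans (le_trans (le_abs_self _) (by simpa using hM t ⟨le_of_lt ht.1, le_trans ht.2 hmb.le⟩)) (le_max_left _ _)
    have hr : (t - a) ^ (-(1/2) : ℝ) = (Real.sqrt (t - a))⁻¹ := by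
      rw [Real.rpow_neg hta.le, Real.sqrt_eq_rpow]
    have key : |q t| / Real.sqrt ((t - a) * (b - t)) ≤ C * (t - a) ^ (-(1/2) : ℝ) := by
      rw [hr, hC]
      have : max M 0 / Real.sqrt (b - m) * (Real.sqrt (t - a))⁻¹
          = max M 0 / (Real.sqrt (t - a) * Real.sqrt (b - m)) := by
        rw [← div_eq_mul_inv, div_div, mul_comm (Real.sqrt (b - m))]
      rw [this]
      exact div_le_div₀ (le_max_right _ _) hqt hpos hsq
    calc ‖q t / Real.sqrt ((t - a) * (b - t))‖
        = |q t| / Real.sqrt ((t - a) * (b - t)) := by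
          rw [Real.norm_eq_abs, abs_div, abs_of_nonneg (Real.sqrt_nonneg _)]
      _ ≤ C * (t - a) ^ (-(1/2) : ℝ) := key
      _ ≤ ‖C * (t - a) ^ (-(1/2) : ℝ)‖ := le_abs_self _

private lemma aux_int {a b : ℝ} (hab : a < b) {q : ℝ → ℝ}
    (hq : ContinuousOn q (Icc a b)) :
    IntervalIntegrable (fun t => q t / Real.sqrt ((t - a) * (b - t))) volume a b := by
  set m := (a + b) / 2 with hm
  have ham : a < m := by simp [hm]; linarith
  have hmb : m < b := by simp [hm]; linarith
  have left := aux_half_left ham hmb hq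
  have hq' : ContinuousOn (fun x => q (a + b - x)) (Icc a b) := by
    apply hq.comp (by fun_prop)
    intro x hx
    exact ⟨by linarith [hx.2], by linarith [hx.1]⟩
  have right' := aux_half_left (show a < a + b - m by simp [hm]; linarith)
    (show a + b - m < b by simp [hm]; linarith) hq'
  have right := (right'.comp_sub_left (a + b)).symm
  have hsame : (fun x => q (a + b - (a + b - x)) /
        Real.sqrt ((a + b - x - a) * (b - (a + b - x))))
      = (fun t => q t / Real.sqrt ((t - a) * (b - t))) := by
    funext x
    have h1 : a + b - (a + b - x) = x := by ring
    have h2 : a + b - x - a = b - x := by ring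
    have h3 : b - (a + b - x) = x - a := by ring
    rw [h1, h2, h3, mul_comm]
  rw [hsame] at right
  have h4 : a + b - (a + b - m) = m := by ring
  have h5 : a + b - a = b := by ring
  rw [h4, h5] at right
  exact left.trans right

theorem stmt4 (a₀ a₁ a₂ κ : ℝ) (h0 : 0 < a₀) (h1 : a₀ < a₁) (h2 : a₁ < a₂)
    (hκ : κ = (a₂^2 - a₀*a₁) / (a₂ * (a₂ - a₀) * (a₂ - a₁))) :
    0 < ∫ t in a₀..a₁,
          Real.sqrt t * (2 - κ * (a₂ - t)) / (Real.sqrt ((t - a₀) * (a₁ - t)) * (a₂ - t)^2) := by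
  set W : ℝ → ℝ := fun t => Real.sqrt ((t - a₀) * (a₁ - t)) with hW
  set D : ℝ := (a₂ - a₀) * (a₂ - a₁) with hDdef
  set N : ℝ → ℝ := fun t => -D - ((a₀ + a₁)/2 - a₂) * (a₂ - t) with hNdef
  have hD : 0 < D := mul_pos (by linarith) (by linarith)
  have ha₂ : 0 < a₂ := by linarith
  have hκpos : 0 < κ := by
    rw [hκ]
    exact div_pos (by nlinarith) (mul_pos (mul_pos ha₂ (by linarith)) (by linarith))
  set c : ℝ := Real.sqrt (max (a₂ - 2/κ) a₀) with hc
  have hcpos : 0 < c := Real.sqrt_pos.2 (lt_of_lt_of_le h0 (le_max_right _ _))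
  -- Integrability of the four integrands
  have int_f : IntervalIntegrable
      (fun t => Real.sqrt t * (2 - κ * (a₂ - t)) / (W t * (a₂ - t)^2)) volume a₀ a₁ := by
    have : (fun t => Real.sqrt t * (2 - κ * (a₂ - t)) / (W t * (a₂ - t)^2))
        = fun t => (Real.sqrt t * (2 - κ * (a₂ - t)) / (a₂ - t)^2) / W t := by
      funext t; rw [div_div, mul_comm ((a₂ - t)^2)]
    rw [this]
    refine aux_int h1 ?_
    apply ContinuousOn.div (by fun_prop) (by fun_prop)
    intro x hx
    have : a₂ - x > 0 := by linarith [hx.2]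
    exact pow_ne_zero 2 (ne_of_gt this)
  have int_inner : IntervalIntegrable
      (fun t => (2 - κ * (a₂ - t)) / (W t * (a₂ - t)^2)) volume a₀ a₁ := by
    have : (fun t => (2 - κ * (a₂ - t)) / (W t * (a₂ - t)^2))
        = fun t => ((2 - κ * (a₂ - t)) / (a₂ - t)^2) / W t := by
      funext t; rw [div_div, mul_comm ((a₂ - t)^2)]
    rw [this]
    refine aux_int h1 ?_
    apply ContinuousOn.div (by fun_prop) (by fun_prop)
    intro x hx
    have : a₂ - x > 0 := by linarith [hx.2]
    exact pow_ne_zero 2 (ne_of_gt this)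
  have int_N : IntervalIntegrable (fun t => N t / (W t * (a₂ - t)^2)) volume a₀ a₁ := by
    have : (fun t => N t / (W t * (a₂ - t)^2)) = fun t => (N t / (a₂ - t)^2) / W t := by
      funext t; rw [div_div, mul_comm ((a₂ - t)^2)]
    rw [this]
    refine aux_int h1 ?_
    apply ContinuousOn.div (by fun_prop) (by fun_prop)
    intro x hx
    have : a₂ - x > 0 := by linarith [hx.2]
    exact pow_ne_zero 2 (ne_of_gt this)
  have int_J : IntervalIntegrable (fun t => 1 / (W t * (a₂ - t))) volume a₀ a₁ := by
    have : (fun t => 1 / (W t * (a₂ - t))) = fun t => (1 / (a₂ - t)) / W t := by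
      funext t; rw [div_div, mul_comm (a₂ - t)]
    rw [this]
    refine aux_int h1 ?_
    apply ContinuousOn.div (by fun_prop) (by fun_prop)
    intro x hx
    have : a₂ - x > 0 := by linarith [hx.2]
    exact ne_of_gt this
  -- FTC identity : ∫ N/(W (a₂-t)²) = 0
  have hFTC : (∫ t in a₀..a₁, N t / (W t * (a₂ - t)^2)) = 0 := by
    have hcont : ContinuousOn (fun t => W t / (a₂ - t)) (Icc a₀ a₁) := by
      apply ContinuousOn.div (by fun_prop) (by fun_prop)
      intro x hx
      have : a₂ - x > 0 := by linarith [hx.2]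
      exact ne_of_gt this
    have hderiv : ∀ t ∈ Ioo a₀ a₁,
        HasDerivWithinAt (fun t => W t / (a₂ - t)) (N t / (W t * (a₂ - t)^2)) (Ioi t) t := by
      intro t ht
      have hp : 0 < (t - a₀) * (a₁ - t) := mul_pos (by linarith [ht.1]) (by linarith [ht.2])
      have hWt : 0 < W t := Real.sqrt_pos.2 hp
      have ha2t : 0 < a₂ - t := by linarith [ht.2]
      have hid' : HasDerivAt (fun s : ℝ => s) 1 t := hasDerivAt_id t
      have hderiv_p : HasDerivAt (fun s => (s - a₀) * (a₁ - s)) (a₀ + a₁ - 2*t) t := by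
        have h := (hid'.sub_const a₀).mul (hid'.const_sub a₁)
        convert h using 1
        · rfl
        · rfl
        · rfl
        · ring
      have hWd : HasDerivAt W ((a₀ + a₁ - 2*t) / (2 * W t)) t := by
        simpa [hW] using hderiv_p.sqrt hp.ne'
      have hGd := hWd.div (hid'.const_sub a₂) (ne_of_gt ha2t)
      have heq : ((a₀ + a₁ - 2*t) / (2 * W t) * (a₂ - t) - W t * -1) / (a₂ - t)^2
          = N t / (W t * (a₂ - t)^2) := by
        have hW2 : W t * W t = (t - a₀) * (a₁ - t) := Real.mul_self_sqrt hp.le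
        rw [hNdef, hDdef]
        simp only
        have hstep : (a₀ + a₁ - 2*t) / (2 * W t) * (a₂ - t) - W t * (-1)
            = (-((a₂ - a₀) * (a₂ - a₁)) - ((a₀ + a₁)/2 - a₂) * (a₂ - t)) / W t := by
          calc (a₀ + a₁ - 2*t) / (2 * W t) * (a₂ - t) - W t * (-1)
              = ((a₀ + a₁ - 2*t) * (a₂ - t) + 2*(W t * W t)) / (2 * W t) := by
                field_simp
                ring
            _ = (2 * (-((a₂ - a₀) * (a₂ - a₁)) - ((a₀ + a₁)/2 - a₂) * (a₂ - t))) / (2 * W t) := by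
                rw [hW2]
                congr 1
                ring
            _ = (-((a₂ - a₀) * (a₂ - a₁)) - ((a₀ + a₁)/2 - a₂) * (a₂ - t)) / W t := by
                rw [mul_div_mul_left _ _ (two_ne_zero)]
        rw [hstep, div_div]
      rw [heq] at hGd
      exact hGd.hasDerivWithinAt
    have := intervalIntegral.integral_eq_sub_of_hasDeriv_right_of_le h1.le hcont hderiv int_N
    rw [this]
    have hWa₀ : W a₀ = 0 := by simp [hW]
    have hWa₁ : W a₁ = 0 := by simp [hW]
    rw [hWa₀, hWa₁]
    simp
  -- scalar decomposition identity
  have h4 : a₂ - a₀ ≠ 0 := (by linarith : (0:ℝ) < a₂ - a₀).ne'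
  have h5 : a₂ - a₁ ≠ 0 := (by linarith : (0:ℝ) < a₂ - a₁).ne'
  have hscal : ∀ t : ℝ, 2 - κ * (a₂ - t) = (-2/D) * N t + (1/a₂) * (a₂ - t) := by
    intro t
    rw [hNdef, hDdef, hκ]
    simp only
    field_simp
    ring
  -- the decomposition identity
  have hid : EqOn (fun t => (2 - κ * (a₂ - t)) / (W t * (a₂ - t)^2))
      (fun t => (-2/D) * (N t / (W t * (a₂ - t)^2)) + (1/a₂) * (1 / (W t * (a₂ - t))))
      (uIcc a₀ a₁) := by
    rw [uIcc_of_le h1.le]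
    intro t ht
    have ha2t : (0:ℝ) < a₂ - t := by linarith [ht.2]
    by_cases hWt : W t = 0
    · simp [hWt]
    · simp only
      rw [hscal t]
      have hDne : D ≠ 0 := hD.ne'
      field_simp
  have hA : (∫ t in a₀..a₁, (2 - κ * (a₂ - t)) / (W t * (a₂ - t)^2))
      = (1/a₂) * ∫ t in a₀..a₁, 1 / (W t * (a₂ - t)) := by
    rw [intervalIntegral.integral_congr hid,
      intervalIntegral.integral_add ((int_N.const_mul _)) ((int_J.const_mul _)),
      intervalIntegral.integral_const_mul, intervalIntegral.integral_const_mul, hFTC]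
    ring
  -- positivity of J₁
  have hJpos : 0 < ∫ t in a₀..a₁, 1 / (W t * (a₂ - t)) := by
    apply intervalIntegral_pos_of_pos_on int_J _ h1
    intro t ht
    have hp : 0 < (t - a₀) * (a₁ - t) := mul_pos (by linarith [ht.1]) (by linarith [ht.2])
    have hWt : 0 < W t := Real.sqrt_pos.2 hp
    have ha2t : 0 < a₂ - t := by linarith [ht.2]
    positivity
  -- pointwise inequality
  have hpt : ∀ t ∈ Icc a₀ a₁,
      c * ((2 - κ * (a₂ - t)) / (W t * (a₂ - t)^2))
        ≤ Real.sqrt t * (2 - κ * (a₂ - t)) / (W t * (a₂ - t)^2) := by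
    intro t ht
    have ha2t : (0:ℝ) < a₂ - t := by linarith [ht.2]
    by_cases hWt : W t = 0
    · simp [hWt]
    · have hWpos : 0 < W t := lt_of_le_of_ne (Real.sqrt_nonneg _) (Ne.symm hWt)
      have hden : 0 < W t * (a₂ - t)^2 := by positivity
      have hκ2 : κ * (2/κ) = 2 := by field_simp
      have key : 0 ≤ (Real.sqrt t - c) * (2 - κ * (a₂ - t)) := by
        rcases le_or_gt (max (a₂ - 2/κ) a₀) t with h | h
        · have hsq : c ≤ Real.sqrt t := Real.sqrt_le_sqrt h
          have hts : a₂ - 2/κ ≤ t := le_trans (le_max_left _ _) h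
          have h2 : 0 ≤ 2 - κ * (a₂ - t) := by
            have hmul : κ * (a₂ - t) ≤ κ * (2/κ) :=
              mul_le_mul_of_nonneg_left (by linarith) hκpos.le
            rw [hκ2] at hmul
            linarith
          exact mul_nonneg (by linarith) h2
        · have hmax : max (a₂ - 2/κ) a₀ = a₂ - 2/κ := by
            rcases max_cases (a₂ - 2/κ) a₀ with ⟨he, _⟩ | ⟨he, hlt⟩
            · exact he
            · exfalso; rw [he] at h; linarith [ht.1]
          have htlt : t < a₂ - 2/κ := by rw [hmax] at h; exact h
          have hsq : Real.sqrt t ≤ c := Real.sqrt_le_sqrt (by rw [hmax]; linarith)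
          have h2 : 2 - κ * (a₂ - t) ≤ 0 := by
            have hmul : κ * (2/κ) < κ * (a₂ - t) :=
              mul_lt_mul_of_pos_left (by linarith) hκpos
            rw [hκ2] at hmul
            linarith
          have := mul_nonneg (neg_nonneg.mpr (by linarith : Real.sqrt t - c ≤ 0))
            (neg_nonneg.mpr h2)
          nlinarith [this]
      rw [← mul_div_assoc]
      rw [div_le_div_iff_of_pos_right hden]
      nlinarith [key]
  -- final assembly
  calc (0:ℝ) < c * ((1/a₂) * ∫ t in a₀..a₁, 1 / (W t * (a₂ - t))) :=
        mul_pos hcpos (mul_pos (by positivity) hJpos)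
    _ = c * ∫ t in a₀..a₁, (2 - κ * (a₂ - t)) / (W t * (a₂ - t)^2) := by rw [hA]
    _ = ∫ t in a₀..a₁, c * ((2 - κ * (a₂ - t)) / (W t * (a₂ - t)^2)) :=
        (intervalIntegral.integral_const_mul _ _).symm
    _ ≤ ∫ t in a₀..a₁, Real.sqrt t * (2 - κ * (a₂ - t)) / (W t * (a₂ - t)^2) :=
        intervalIntegral.integral_mono_on h1.le (int_inner.const_mul c) int_f hpt
end

section
/- Let 0 < a₀ < a₁ < a₂ and define κ := (a₂² - a₀a₁)/(a₂(a₂-a₀)(a₂-a₁)). Then ∫_{a₀}^{a₁} √t · (2 - κ(a₂-t)) / (√((t-a₀)(a₁-t)) (a₂-t)²) dt equals (2a₀√a₁ / (a₂(a₂-a₀)(a₂-a₁))) · ((a₂/a₀)·E(√(1-a₀/a₁)) - K(√(1-a₀/a₁))), where K and E are the complete elliptic integrals of the first and second kind. -/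
open Real Set Filter MeasureTheory

lemma aux_integrable (h : ℝ → ℝ) (M : ℝ)
    (hc : ContinuousOn h (Ioo 0 1))
    (hb : ∀ s ∈ Ioo (0:ℝ) 1, |h s| ≤ M * (1-s)^(-(1/2):ℝ)) :
    IntegrableOn h (Ioo (0:ℝ) 1) := by
  have hbase : IntervalIntegrable (fun x : ℝ => M * (1-x)^(-(1/2):ℝ)) volume 0 1 := by
    have h1 : IntervalIntegrable (fun x : ℝ => x ^ (-(1/2):ℝ)) volume (1-1) (1-0) :=
      intervalIntegral.intervalIntegrable_rpow' (by norm_num)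
    have h2 := (h1.comp_sub_left 1)
    simpa using (h2.const_mul M).symm
  have hint : IntegrableOn (fun x : ℝ => M * (1-x)^(-(1/2):ℝ)) (Ioo (0:ℝ) 1) := by
    have := hbase.1
    exact this.mono_set Ioo_subset_Ioc_self
  refine hint.integrable.mono (hc.aestronglyMeasurable measurableSet_Ioo) ?_
  filter_upwards [ae_restrict_mem measurableSet_Ioo] with s hs
  have h1 : (0:ℝ) ≤ (1-s)^(-(1/2):ℝ) := Real.rpow_nonneg (by linarith [hs.2]) _
  have := hb s hs
  rw [Real.norm_eq_abs, Real.norm_eq_abs]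
  exact this.trans (le_abs_self _)

set_option maxHeartbeats 1000000 in
theorem stmt5 (a₀ a₁ a₂ κ : ℝ) (h0 : 0 < a₀) (h1 : a₀ < a₁) (h2 : a₁ < a₂)
    (hκ : κ = (a₂^2 - a₀*a₁) / (a₂ * (a₂ - a₀) * (a₂ - a₁))) :
    (∫ t in a₀..a₁,
        Real.sqrt t * (2 - κ * (a₂ - t)) / (Real.sqrt ((t - a₀) * (a₁ - t)) * (a₂ - t)^2))
      = (2 * a₀ * Real.sqrt a₁ / (a₂ * (a₂ - a₀) * (a₂ - a₁))) *
          ((a₂ / a₀) *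
            (∫ s in (0:ℝ)..1,
              Real.sqrt (1 - (Real.sqrt (1 - a₀/a₁))^2 * s^2) / Real.sqrt (1 - s^2))
          - ∫ s in (0:ℝ)..1,
              1 / Real.sqrt ((1 - s^2) * (1 - (Real.sqrt (1 - a₀/a₁))^2 * s^2))) := by
  have h01 : (0:ℝ) < a₁ := h0.trans h1
  have h02 : (0:ℝ) < a₂ := h01.trans h2
  have hd1 : (0:ℝ) < a₁ - a₀ := by linarith
  have hd2 : (0:ℝ) < a₂ - a₁ := by linarith
  have hd0 : (0:ℝ) < a₂ - a₀ := by linarith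
  have hμnn : (0:ℝ) ≤ 1 - a₀/a₁ := by
    have : a₀/a₁ < 1 := (div_lt_one h01).2 h1
    linarith
  rw [Real.sq_sqrt hμnn]
  set μ : ℝ := 1 - a₀/a₁ with hμdef
  have hμ0 : 0 < μ := by
    have : a₀/a₁ < 1 := (div_lt_one h01).2 h1
    simp only [hμdef]; linarith
  have hμ1 : μ < 1 := by
    have : 0 < a₀/a₁ := div_pos h0 h01
    simp only [hμdef]; linarith
  have hμa : a₁ * μ = a₁ - a₀ := by
    rw [hμdef, mul_sub, mul_one, mul_div_assoc', mul_comm a₁ a₀, mul_div_assoc, div_self h01.ne', mul_one]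
  set q : ℝ := Real.sqrt a₁ with hqdef
  have hq0 : 0 < q := Real.sqrt_pos.2 h01
  have hq2 : q^2 = a₁ := Real.sq_sqrt h01.le
  -- key functions
  set w : ℝ → ℝ := fun s => (a₂ - a₁) + (a₁ - a₀) * s^2 with hwdef
  have hw0 : ∀ s : ℝ, 0 < w s := fun s => by
    have : 0 ≤ (a₁ - a₀) * s^2 := by positivity
    simp only [hwdef]; linarith
  set f : ℝ → ℝ := fun s =>
    2 * q * Real.sqrt (1 - μ*s^2) * (2 - κ * w s) / (Real.sqrt (1 - s^2) * (w s)^2) with hfdef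
  set eE : ℝ → ℝ := fun s => Real.sqrt (1 - μ*s^2) / Real.sqrt (1 - s^2) with heEdef
  set eK : ℝ → ℝ := fun s => 1 / Real.sqrt ((1 - s^2) * (1 - μ*s^2)) with heKdef
  set C : ℝ := 2 * a₀ * q / (a₂ * (a₂ - a₀) * (a₂ - a₁)) with hCdef
  set A : ℝ := 2 * q * (a₁ - a₀) / ((a₂ - a₀) * (a₂ - a₁)) with hAdef
  set r : ℝ → ℝ := fun s => C * (a₂/a₀) * eE s - C * eK s with hrdef
  set g : ℝ → ℝ := fun s =>
    A * s * Real.sqrt (1 - s^2) * Real.sqrt (1 - μ*s^2) / w s with hgdef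
  set G : ℝ → ℝ := fun s =>
    A * ((Real.sqrt (1 - s^2) * Real.sqrt (1 - μ*s^2)
          - s^2 * Real.sqrt (1 - μ*s^2) / Real.sqrt (1 - s^2)
          - μ * s^2 * Real.sqrt (1 - s^2) / Real.sqrt (1 - μ*s^2)) * w s
        - s * Real.sqrt (1 - s^2) * Real.sqrt (1 - μ*s^2) * (2 * (a₁ - a₀) * s)) / (w s)^2
    with hGdef
  -- basic facts on Ioo
  have hsfacts : ∀ s ∈ Ioo (0:ℝ) 1, 0 < 1 - s^2 ∧ 0 < 1 - μ*s^2 := by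
    intro s hs
    obtain ⟨hs0, hs1⟩ := hs
    constructor
    · nlinarith
    · nlinarith
  -- pointwise identity
  have hpt : ∀ s ∈ Ioo (0:ℝ) 1, f s = r s + G s := by
    intro s hs
    obtain ⟨hX, hY⟩ := hsfacts s hs
    set u := Real.sqrt (1 - s^2) with hudef
    set v := Real.sqrt (1 - μ*s^2) with hvdef
    have hu0 : 0 < u := Real.sqrt_pos.2 hX
    have hv0 : 0 < v := Real.sqrt_pos.2 hY
    have hu2 : u^2 = 1 - s^2 := Real.sq_sqrt hX.le
    have hv2 : v^2 = 1 - μ*s^2 := Real.sq_sqrt hY.le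
    have huv : Real.sqrt ((1 - s^2) * (1 - μ*s^2)) = u * v := Real.sqrt_mul hX.le _
    have hws := hw0 s
    have ha2 : a₂ ≠ 0 := h02.ne'
    have hda0 : a₂ - a₀ ≠ 0 := hd0.ne'
    have hda2 : a₂ - a₁ ≠ 0 := hd2.ne'
    have ha1 : a₁ ≠ 0 := h01.ne'
    have ha0 : a₀ ≠ 0 := h0.ne'
    simp only [hfdef, hrdef, hGdef, heEdef, heKdef, huv]
    have e1 : 2*q*v*(2-κ*w s)/(u*(w s)^2)
        = q*u*v*((2*(1-μ*s^2)*(2-κ*w s))/((1-s^2)*((1-μ*s^2)*(w s)^2))) := by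
      rw [← hu2, ← hv2]
      field_simp
    have e2 : C*(a₂/a₀)*(v/u) - C*(1/(u*v))
        = q*u*v*(((2/(a₂*(a₂-a₀)*(a₂-a₁)))*(a₂*(1-μ*s^2)-a₀)*(w s)^2)
            /((1-s^2)*((1-μ*s^2)*(w s)^2))) := by
      rw [← hu2, ← hv2, hCdef]
      field_simp
    have e3 : A*((u*v - s^2*v/u - μ*s^2*u/v)*w s - s*u*v*(2*(a₁-a₀)*s))/(w s)^2
        = q*u*v*(((2*(a₁-a₀)/((a₂-a₀)*(a₂-a₁)))
            *(((1-s^2)*(1-μ*s^2) - s^2*(1-μ*s^2) - μ*s^2*(1-s^2))*w s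
              - 2*(a₁-a₀)*s^2*(1-s^2)*(1-μ*s^2)))
            /((1-s^2)*((1-μ*s^2)*(w s)^2))) := by
      rw [← hu2, ← hv2, hAdef]
      field_simp
    have key : 2*(1-μ*s^2)*(2-κ*w s)
        = (2/(a₂*(a₂-a₀)*(a₂-a₁)))*(a₂*(1-μ*s^2)-a₀)*(w s)^2
          + (2*(a₁-a₀)/((a₂-a₀)*(a₂-a₁)))
            *(((1-s^2)*(1-μ*s^2) - s^2*(1-μ*s^2) - μ*s^2*(1-s^2))*w s
              - 2*(a₁-a₀)*s^2*(1-s^2)*(1-μ*s^2)) := by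
      have hwa : w s = a₂ - a₁ + (a₁-a₀)*s^2 := by simp [hwdef]
      rw [hκ, hμdef, hwa]
      field_simp
      ring
    calc 2*q*v*(2-κ*w s)/(u*(w s)^2)
        = q*u*v*((2*(1-μ*s^2)*(2-κ*w s))/((1-s^2)*((1-μ*s^2)*(w s)^2))) := e1
      _ = q*u*v*(((2/(a₂*(a₂-a₀)*(a₂-a₁)))*(a₂*(1-μ*s^2)-a₀)*(w s)^2)
            /((1-s^2)*((1-μ*s^2)*(w s)^2)))
          + q*u*v*(((2*(a₁-a₀)/((a₂-a₀)*(a₂-a₁)))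
            *(((1-s^2)*(1-μ*s^2) - s^2*(1-μ*s^2) - μ*s^2*(1-s^2))*w s
              - 2*(a₁-a₀)*s^2*(1-s^2)*(1-μ*s^2)))
            /((1-s^2)*((1-μ*s^2)*(w s)^2))) := by
          rw [key]; ring
      _ = (C*(a₂/a₀)*(v/u) - C*(1/(u*v)))
          + A*((u*v - s^2*v/u - μ*s^2*u/v)*w s - s*u*v*(2*(a₁-a₀)*s))/(w s)^2 := by
          rw [e2, e3]
      _ = C * (a₂/a₀) * (v/u) - C * (1/(u*v))
          + A*((u*v - s^2*v/u - μ*s^2*u/v)*w s - s*u*v*(2*(a₁-a₀)*s))/(w s)^2 := by ring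
  -- derivative of g
  have hgderiv : ∀ s ∈ Ioo (0:ℝ) 1, HasDerivAt g (G s) s := by
    intro s hs
    obtain ⟨hX, hY⟩ := hsfacts s hs
    have hws := hw0 s
    have hu0 : 0 < Real.sqrt (1 - s^2) := Real.sqrt_pos.2 hX
    have hv0 : 0 < Real.sqrt (1 - μ*s^2) := Real.sqrt_pos.2 hY
    have hU : HasDerivAt (fun x : ℝ => Real.sqrt (1 - x^2)) (-s / Real.sqrt (1 - s^2)) s := by
      have h1 : HasDerivAt (fun x : ℝ => 1 - x^2) (-(2*s)) s := by
        have := ((hasDerivAt_pow 2 s).const_sub 1)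
        refine this.congr_deriv ?_; push_cast; ring
      have h2 := (Real.hasDerivAt_sqrt hX.ne').comp s h1
      refine h2.congr_deriv ?_
      field_simp
    have hV : HasDerivAt (fun x : ℝ => Real.sqrt (1 - μ*x^2)) (-(μ*s) / Real.sqrt (1 - μ*s^2)) s := by
      have h1 : HasDerivAt (fun x : ℝ => 1 - μ*x^2) (-(μ*(2*s))) s := by
        have := (((hasDerivAt_pow 2 s).const_mul μ).const_sub 1)
        refine this.congr_deriv ?_; push_cast; ring
      have h2 := (Real.hasDerivAt_sqrt hY.ne').comp s h1
      refine h2.congr_deriv ?_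
      field_simp
    have hW : HasDerivAt w (2*(a₁-a₀)*s) s := by
      rw [hwdef]
      have := (((hasDerivAt_pow 2 s).const_mul (a₁-a₀)).const_add (a₂-a₁))
      refine this.congr_deriv ?_; push_cast; ring
    have h1 : HasDerivAt (fun x : ℝ => A * x) A s := by
      simpa using (hasDerivAt_id s).const_mul A
    have hN := (h1.mul hU).mul hV
    have hD := hN.div hW hws.ne'
    simp only [hgdef, hGdef]
    refine hD.congr_deriv ?_
    simp only [Pi.mul_apply]
    field_simp
    ring
  -- continuity lemmas
  have hcX : Continuous (fun s : ℝ => Real.sqrt (1 - s^2)) := by fun_prop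
  have hcY : Continuous (fun s : ℝ => Real.sqrt (1 - μ*s^2)) := by fun_prop
  have hcW : Continuous w := by rw [hwdef]; fun_prop
  have hfc : ContinuousOn f (Ioo 0 1) := by
    simp only [hfdef]
    apply ContinuousOn.div
    · exact (((continuous_const.mul hcY).mul (continuous_const.sub (continuous_const.mul hcW)))).continuousOn
    · exact (hcX.mul (hcW.pow 2)).continuousOn
    · intro x hx
      exact mul_ne_zero (Real.sqrt_pos.2 (hsfacts x hx).1).ne' (pow_ne_zero 2 (hw0 x).ne')
  have heEc : ContinuousOn eE (Ioo 0 1) := by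
    simp only [heEdef]
    exact ContinuousOn.div hcY.continuousOn hcX.continuousOn
      (fun x hx => (Real.sqrt_pos.2 (hsfacts x hx).1).ne')
  have heKc : ContinuousOn eK (Ioo 0 1) := by
    simp only [heKdef]
    apply ContinuousOn.div continuousOn_const
    · fun_prop
    · intro x hx
      have := hsfacts x hx
      exact (Real.sqrt_pos.2 (mul_pos this.1 this.2)).ne'
  -- integrability
  have hrpow : ∀ s ∈ Ioo (0:ℝ) 1, (1-s)^(-(1/2):ℝ) = (Real.sqrt (1-s))⁻¹ := by
    intro s hs
    rw [Real.sqrt_eq_rpow, ← Real.rpow_neg (by linarith [hs.2])]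
  have hsqle : ∀ s ∈ Ioo (0:ℝ) 1, Real.sqrt (1-s) ≤ Real.sqrt (1 - s^2) := by
    intro s hs
    apply Real.sqrt_le_sqrt
    nlinarith [hs.1, hs.2, hμ0.le, sq_nonneg s]
  have hsq0 : ∀ s ∈ Ioo (0:ℝ) 1, 0 < Real.sqrt (1-s) := by
    intro s hs
    exact Real.sqrt_pos.2 (by linarith [hs.2])
  have heEint : IntegrableOn eE (Ioo (0:ℝ) 1) := by
    apply aux_integrable eE 1 heEc
    intro s hs
    obtain ⟨hX, hY⟩ := hsfacts s hs
    rw [hrpow s hs, one_mul]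
    have h1 : |eE s| = Real.sqrt (1 - μ*s^2) / Real.sqrt (1 - s^2) := by
      simp only [heEdef]
      exact abs_of_nonneg (div_nonneg (Real.sqrt_nonneg _) (Real.sqrt_nonneg _))
    have hnum1 : Real.sqrt (1 - μ*s^2) ≤ 1 := by
      calc Real.sqrt (1 - μ*s^2) ≤ Real.sqrt 1 := Real.sqrt_le_sqrt (by nlinarith [hs.1, hs.2, hμ0.le, sq_nonneg s])
        _ = 1 := Real.sqrt_one
    rw [h1, inv_eq_one_div]
    exact div_le_div₀ (by norm_num) hnum1 (hsq0 s hs) (hsqle s hs)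
  have heKint : IntegrableOn eK (Ioo (0:ℝ) 1) := by
    apply aux_integrable eK (Real.sqrt (1-μ))⁻¹ heKc
    intro s hs
    obtain ⟨hX, hY⟩ := hsfacts s hs
    rw [hrpow s hs]
    have hm0 : 0 < Real.sqrt (1-μ) := Real.sqrt_pos.2 (by linarith)
    have h1 : |eK s| = 1 / (Real.sqrt (1 - s^2) * Real.sqrt (1 - μ*s^2)) := by
      simp only [heKdef, Real.sqrt_mul hX.le]
      exact abs_of_nonneg (by positivity)
    rw [h1]
    have h2 : Real.sqrt (1-s) * Real.sqrt (1-μ) ≤ Real.sqrt (1-s^2) * Real.sqrt (1-μ*s^2) :=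
      mul_le_mul (hsqle s hs) (Real.sqrt_le_sqrt (by nlinarith [hs.1, hs.2, hμ0.le, sq_nonneg s])) hm0.le (Real.sqrt_nonneg _)
    calc 1 / (Real.sqrt (1-s^2) * Real.sqrt (1-μ*s^2))
        ≤ 1 / (Real.sqrt (1-s) * Real.sqrt (1-μ)) :=
          one_div_le_one_div_of_le (mul_pos (hsq0 s hs) hm0) h2
      _ = (Real.sqrt (1-μ))⁻¹ * (Real.sqrt (1-s))⁻¹ := by
          rw [one_div, mul_inv]; ring
  have hfint : IntegrableOn f (Ioo (0:ℝ) 1) := by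
    apply aux_integrable f (2*q*(2+|κ| * (a₂-a₀))/(a₂-a₁)^2) hfc
    intro s hs
    obtain ⟨hX, hY⟩ := hsfacts s hs
    rw [hrpow s hs]
    have hws := hw0 s
    have hwle : w s ≤ a₂ - a₀ := by
      simp only [hwdef]
      nlinarith [hs.1, hs.2, hμ0.le, sq_nonneg s]
    have hwge : a₂ - a₁ ≤ w s := by
      simp only [hwdef]
      nlinarith [hs.1]
    have hnum : |2 * q * Real.sqrt (1 - μ*s^2) * (2 - κ * w s)| ≤ 2*q*(2+|κ| * (a₂-a₀)) := by
      rw [abs_mul]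
      have h2 : |2 * q * Real.sqrt (1 - μ*s^2)| ≤ 2*q := by
        rw [abs_of_nonneg (by positivity)]
        have : Real.sqrt (1 - μ*s^2) ≤ 1 := by
          have h9 : Real.sqrt (1 - μ*s^2) ≤ Real.sqrt 1 :=
            Real.sqrt_le_sqrt (by nlinarith [hs.1, hs.2, hμ0.le, sq_nonneg s])
          simpa using h9
        nlinarith [hq0]
      have h3 : |2 - κ * w s| ≤ 2 + |κ| * (a₂-a₀) := by
        calc |2 - κ * w s| ≤ |(2:ℝ)| + |κ * w s| := abs_sub _ _
          _ = 2 + |κ| * w s := by rw [abs_mul, abs_of_pos hws, abs_two]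
          _ ≤ 2 + |κ| * (a₂-a₀) := by nlinarith [abs_nonneg κ]
      calc |2 * q * Real.sqrt (1 - μ*s^2)| * |2 - κ * w s|
          ≤ (2*q) * (2 + |κ| * (a₂-a₀)) := by
            apply mul_le_mul h2 h3 (abs_nonneg _) (by positivity)
        _ = 2*q*(2+|κ| * (a₂-a₀)) := by ring
    have hden : Real.sqrt (1-s) * (a₂-a₁)^2 ≤ Real.sqrt (1 - s^2) * (w s)^2 := by
      apply mul_le_mul (hsqle s hs) _ (by positivity) (Real.sqrt_nonneg _)
      nlinarith [hws]
    have habs : |f s| = |2 * q * Real.sqrt (1 - μ*s^2) * (2 - κ * w s)| / (Real.sqrt (1 - s^2) * (w s)^2) := by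
      simp only [hfdef, abs_div]
      congr 1
      exact abs_of_pos (by positivity)
    have hq1s := hsq0 s hs
    rw [habs]
    calc |2 * q * Real.sqrt (1 - μ*s^2) * (2 - κ * w s)| / (Real.sqrt (1 - s^2) * (w s)^2)
        ≤ (2*q*(2+|κ| * (a₂-a₀))) / (Real.sqrt (1-s) * (a₂-a₁)^2) :=
          div_le_div₀ (by positivity) hnum (by positivity) hden
      _ = (2*q*(2+|κ| * (a₂-a₀))/(a₂-a₁)^2) * (Real.sqrt (1-s))⁻¹ := by
          field_simp
  -- change of variables for LHS
  have hLHS : (∫ t in a₀..a₁,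
        Real.sqrt t * (2 - κ * (a₂ - t)) / (Real.sqrt ((t - a₀) * (a₁ - t)) * (a₂ - t)^2))
      = ∫ s in Ioo (0:ℝ) 1, f s := by
    rw [intervalIntegral.integral_of_le h1.le, MeasureTheory.integral_Ioc_eq_integral_Ioo]
    have himg : (fun s : ℝ => a₁ - (a₁-a₀)*s^2) '' Ioo 0 1 = Ioo a₀ a₁ := by
      ext x
      constructor
      · rintro ⟨s, hs, rfl⟩
        obtain ⟨hs0, hs1⟩ := hs
        constructor
        · show a₀ < a₁ - (a₁-a₀)*s^2
          nlinarith [mul_pos hd1 (show (0:ℝ) < 1 - s^2 by nlinarith)]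
        · show a₁ - (a₁-a₀)*s^2 < a₁
          nlinarith [mul_pos hd1 (pow_pos hs0 2)]
      · rintro ⟨hx0, hx1⟩
        have hnn : 0 < (a₁ - x)/(a₁-a₀) := div_pos (by linarith) hd1
        refine ⟨Real.sqrt ((a₁ - x)/(a₁-a₀)), ⟨Real.sqrt_pos.2 hnn, ?_⟩, ?_⟩
        · have hlt : (a₁ - x)/(a₁-a₀) < 1 := by
            rw [div_lt_one hd1]; linarith
          have h9 : Real.sqrt ((a₁ - x)/(a₁-a₀)) < Real.sqrt 1 :=
            (Real.sqrt_lt_sqrt hnn.le hlt)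
          simpa using h9
        · show a₁ - (a₁-a₀)*(Real.sqrt ((a₁ - x)/(a₁-a₀)))^2 = x
          rw [Real.sq_sqrt hnn.le]
          field_simp
          ring
    have hderiv : ∀ x ∈ Ioo (0:ℝ) 1,
        HasDerivWithinAt (fun s : ℝ => a₁ - (a₁-a₀)*s^2) (-(2*(a₁-a₀)*x)) (Ioo 0 1) x := by
      intro x _
      have h9 : HasDerivAt (fun s : ℝ => a₁ - (a₁-a₀)*s^2) (-(2*(a₁-a₀)*x)) x := by
        have := ((hasDerivAt_pow 2 x).const_mul (a₁-a₀)).const_sub a₁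
        refine this.congr_deriv ?_
        push_cast; ring
      exact h9.hasDerivWithinAt
    have hinj : InjOn (fun s : ℝ => a₁ - (a₁-a₀)*s^2) (Ioo 0 1) := by
      intro x hx y hy hxy
      simp only at hxy
      have h9 : x^2 = y^2 := by
        have := mul_left_cancel₀ hd1.ne' (show (a₁-a₀)*x^2 = (a₁-a₀)*y^2 by linarith)
        exact this
      rw [← Real.sqrt_sq hx.1.le, ← Real.sqrt_sq hy.1.le, h9]
    rw [← himg, MeasureTheory.integral_image_eq_integral_abs_deriv_smul measurableSet_Ioo hderiv hinj]
    apply MeasureTheory.setIntegral_congr_fun measurableSet_Ioo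
    intro s hs
    obtain ⟨hX, hY⟩ := hsfacts s hs
    have hws := hw0 s
    have hu0 : 0 < Real.sqrt (1 - s^2) := Real.sqrt_pos.2 hX
    have habs : |(-(2*(a₁-a₀)*s))| = 2*(a₁-a₀)*s := by
      rw [abs_neg, abs_of_pos (mul_pos (mul_pos two_pos hd1) hs.1)]
    have e1 : a₂ - (a₁ - (a₁-a₀)*s^2) = w s := by
      simp only [hwdef]; ring
    have e2 : (a₁ - (a₁-a₀)*s^2) - a₀ = (a₁-a₀)*(1-s^2) := by ring
    have e3 : a₁ - (a₁ - (a₁-a₀)*s^2) = (a₁-a₀)*s^2 := by ring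
    have e4 : Real.sqrt ((a₁-a₀)*(1-s^2) * ((a₁-a₀)*s^2)) = ((a₁-a₀)*s) * Real.sqrt (1-s^2) := by
      rw [show (a₁-a₀)*(1-s^2) * ((a₁-a₀)*s^2) = ((a₁-a₀)*s)^2*(1-s^2) by ring,
        Real.sqrt_mul (sq_nonneg _), Real.sqrt_sq (mul_nonneg hd1.le hs.1.le)]
    have e5 : Real.sqrt (a₁ - (a₁-a₀)*s^2) = q * Real.sqrt (1 - μ*s^2) := by
      rw [show a₁ - (a₁-a₀)*s^2 = a₁*(1-μ*s^2) by rw [← hμa]; ring,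
        Real.sqrt_mul h01.le, hqdef]
    show |(-(2*(a₁-a₀)*s))| • (Real.sqrt (a₁ - (a₁-a₀)*s^2) * (2 - κ * (a₂ - (a₁ - (a₁-a₀)*s^2))) /
        (Real.sqrt (((a₁ - (a₁-a₀)*s^2) - a₀) * (a₁ - (a₁ - (a₁-a₀)*s^2))) * (a₂ - (a₁ - (a₁-a₀)*s^2))^2)) = f s
    rw [habs, e1, e2, e3, e4, e5, smul_eq_mul]
    simp only [hfdef]
    have hds : (a₁-a₀)*s ≠ 0 := (mul_pos hd1 hs.1).ne'
    have hs0 : s ≠ 0 := hs.1.ne'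
    field_simp
  -- FTC: integral of G is zero
  have hGint : IntegrableOn G (Ioo (0:ℝ) 1) := by
    have hsub : IntegrableOn (fun s => f s - r s) (Ioo (0:ℝ) 1) := by
      apply hfint.sub
      simp only [hrdef]
      exact ((heEint.const_mul _).sub (heKint.const_mul _))
    apply hsub.congr_fun _ measurableSet_Ioo
    intro s hs
    show f s - r s = G s
    rw [hpt s hs]; ring
  have hGzero : (∫ s in Ioo (0:ℝ) 1, G s) = 0 := by
    have hGii : IntervalIntegrable G volume 0 1 := by
      rw [intervalIntegrable_iff_integrableOn_Ioo_of_le (by norm_num : (0:ℝ) ≤ 1)]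
      exact hGint
    have hwne : ∀ x : ℝ, w x ≠ 0 := fun x => (hw0 x).ne'
    have hcont : ContinuousOn g (Icc (0:ℝ) 1) := by
      simp only [hgdef]
      exact ContinuousOn.div
        ((((continuous_const.mul continuous_id).mul hcX).mul hcY)).continuousOn
        hcW.continuousOn (fun x _ => hwne x)
    have heq : ∫ s in (0:ℝ)..1, G s = g 1 - g 0 :=
      intervalIntegral.integral_eq_sub_of_hasDeriv_right_of_le (by norm_num) hcont
        (fun x hx => (hgderiv x hx).hasDerivWithinAt) hGii
    have hg0 : g 0 = 0 := by simp [hgdef]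
    have hg1 : g 1 = 0 := by
      simp only [hgdef]
      norm_num
    rw [← MeasureTheory.integral_Ioc_eq_integral_Ioo,
      ← intervalIntegral.integral_of_le (by norm_num : (0:ℝ) ≤ 1), heq, hg0, hg1, sub_zero]
  -- conclusion
  have hE1 : (∫ s in (0:ℝ)..1, Real.sqrt (1 - μ*s^2) / Real.sqrt (1 - s^2))
      = ∫ s in Ioo (0:ℝ) 1, eE s := by
    rw [intervalIntegral.integral_of_le (by norm_num : (0:ℝ) ≤ 1),
      MeasureTheory.integral_Ioc_eq_integral_Ioo]
  have hK1 : (∫ s in (0:ℝ)..1, 1 / Real.sqrt ((1 - s^2) * (1 - μ*s^2)))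
      = ∫ s in Ioo (0:ℝ) 1, eK s := by
    rw [intervalIntegral.integral_of_le (by norm_num : (0:ℝ) ≤ 1),
      MeasureTheory.integral_Ioc_eq_integral_Ioo]
  rw [hLHS, hE1, hK1]
  have hrint : IntegrableOn r (Ioo (0:ℝ) 1) := by
    simp only [hrdef]
    exact ((heEint.const_mul _).sub (heKint.const_mul _))
  have : (∫ s in Ioo (0:ℝ) 1, f s) = ∫ s in Ioo (0:ℝ) 1, (r s + G s) := by
    apply MeasureTheory.setIntegral_congr_fun measurableSet_Ioo
    intro s hs
    exact hpt s hs
  rw [this, MeasureTheory.integral_add hrint hGint, hGzero, add_zero]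
  simp only [hrdef]
  rw [MeasureTheory.integral_sub (heEint.const_mul _) (heKint.const_mul _),
    MeasureTheory.integral_const_mul, MeasureTheory.integral_const_mul]
  simp only [hCdef]
  ring
end

section
/- Let 0 < a₀ < a₁ < a₂. Then for every λ ∈ (a₀, a₁), (√((a₂-a₀)(a₂-a₁)/a₂) / π) · ∫_λ^{a₁} √t / (√((t-a₀)(a₁-t)) (a₂-t)) dt < √(a₁/a₂) < 1. -/
open Real Set Filter MeasureTheory

private lemma wsq_aux (a₀ a₁ a₂ t : ℝ) (hE : a₁ - a₀ ≠ 0) (ht2 : a₂ - t ≠ 0) :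
    1 - (((2*a₂ - a₀ - a₁)*t + (2*a₀*a₁ - a₂*a₀ - a₂*a₁)) / ((a₁ - a₀)*(a₂ - t))) ^ 2
      = 4*((a₂ - a₀)*(a₂ - a₁))*((t - a₀)*(a₁ - t))/((a₁ - a₀)^2*(a₂ - t)^2) := by
  field_simp
  ring

private lemma deriv_aux (a₀ a₁ a₂ t : ℝ) (h1 : a₀ < a₁) (h2 : a₁ < a₂)
    (ht0 : a₀ < t) (ht1 : t < a₁) :
    HasDerivAt (fun s => Real.arcsin
        (((2*a₂ - a₀ - a₁)*s + (2*a₀*a₁ - a₂*a₀ - a₂*a₁)) / ((a₁ - a₀)*(a₂ - s)))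
        / Real.sqrt ((a₂ - a₀)*(a₂ - a₁)))
      (1 / (Real.sqrt ((t - a₀) * (a₁ - t)) * (a₂ - t))) t := by
  have hE : 0 < a₁ - a₀ := by linarith
  have ht2 : 0 < a₂ - t := by linarith
  have hX : 0 < (t - a₀) * (a₁ - t) := mul_pos (by linarith) (by linarith)
  have hD2 : Real.sqrt ((a₂ - a₀)*(a₂ - a₁)) ^ 2 = (a₂ - a₀)*(a₂ - a₁) :=
    Real.sq_sqrt (by nlinarith)
  have hDpos : 0 < Real.sqrt ((a₂ - a₀)*(a₂ - a₁)) := Real.sqrt_pos.2 (by nlinarith)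
  set w : ℝ → ℝ := fun s =>
    ((2*a₂ - a₀ - a₁)*s + (2*a₀*a₁ - a₂*a₀ - a₂*a₁)) / ((a₁ - a₀)*(a₂ - s)) with hw
  have hsq : 1 - w t ^ 2
      = 4*((a₂ - a₀)*(a₂ - a₁))*((t - a₀)*(a₁ - t))/((a₁ - a₀)^2*(a₂ - t)^2) :=
    wsq_aux a₀ a₁ a₂ t hE.ne' ht2.ne'
  have hA : 0 < a₂ - a₀ := by linarith
  have hB : 0 < a₂ - a₁ := by linarith
  have hpos : 0 < 1 - w t ^ 2 := by
    rw [hsq]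
    exact div_pos (mul_pos (mul_pos (by norm_num : (0:ℝ) < 4) (mul_pos hA hB)) hX)
      (mul_pos (pow_pos hE 2) (pow_pos ht2 2))
  have hne1 : w t ≠ 1 := by intro h; rw [h] at hpos; norm_num at hpos
  have hne1' : w t ≠ -1 := by intro h; rw [h] at hpos; norm_num at hpos
  have hwd : HasDerivAt w (2*((a₂ - a₀)*(a₂ - a₁))/((a₁ - a₀)*(a₂ - t)^2)) t := by
    have h1' : HasDerivAt (fun s => (2*a₂ - a₀ - a₁)*s + (2*a₀*a₁ - a₂*a₀ - a₂*a₁))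
        (2*a₂ - a₀ - a₁) t := by
      simpa using ((hasDerivAt_id t).const_mul (2*a₂ - a₀ - a₁)).add_const (2*a₀*a₁ - a₂*a₀ - a₂*a₁)
    have h2' : HasDerivAt (fun s => (a₁ - a₀)*(a₂ - s)) (-(a₁ - a₀)) t := by
      simpa using ((hasDerivAt_id t).const_sub a₂).const_mul (a₁ - a₀)
    have hden : (a₁ - a₀)*(a₂ - t) ≠ 0 := (mul_pos hE ht2).ne'
    have := h1'.div h2' hden
    refine this.congr_deriv (Eq.symm ?_)
    field_simp
    ring
  have harc := ((Real.hasDerivAt_arcsin hne1' hne1).comp t hwd).div_const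
    (Real.sqrt ((a₂ - a₀)*(a₂ - a₁)))
  refine harc.congr_deriv (Eq.symm ?_)
  have hsqrt : Real.sqrt (1 - w t ^ 2)
      = 2*Real.sqrt ((a₂ - a₀)*(a₂ - a₁))*Real.sqrt ((t - a₀)*(a₁ - t))/((a₁ - a₀)*(a₂ - t)) := by
    rw [hsq,
      show 4*((a₂ - a₀)*(a₂ - a₁))*((t - a₀)*(a₁ - t))/((a₁ - a₀)^2*(a₂ - t)^2)
        = (2*Real.sqrt ((a₂ - a₀)*(a₂ - a₁))*Real.sqrt ((t - a₀)*(a₁ - t))/((a₁ - a₀)*(a₂ - t)))^2 by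
        rw [div_pow, mul_pow, mul_pow, Real.sq_sqrt hX.le, hD2, mul_pow]; ring]
    exact Real.sqrt_sq (by positivity)
  rw [hsqrt]
  set u := Real.sqrt ((a₂ - a₀)*(a₂ - a₁)) with hu
  set v := Real.sqrt ((t - a₀)*(a₁ - t)) with hv
  have hu2 : u ^ 2 = (a₂ - a₀)*(a₂ - a₁) := hD2
  have hvpos : 0 < v := Real.sqrt_pos.2 hX
  field_simp
  linear_combination hu2

theorem stmt8 (a₀ a₁ a₂ : ℝ) (h0 : 0 < a₀) (h1 : a₀ < a₁) (h2 : a₁ < a₂) :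
    ∀ lam ∈ Set.Ioo a₀ a₁,
      (Real.sqrt ((a₂ - a₀) * (a₂ - a₁) / a₂) / π) *
          (∫ t in lam..a₁,
            Real.sqrt t / (Real.sqrt ((t - a₀) * (a₁ - t)) * (a₂ - t)))
        < Real.sqrt (a₁ / a₂)
      ∧ Real.sqrt (a₁ / a₂) < 1 := by
  rintro lam ⟨hla, hlb⟩
  have ha₂ : 0 < a₂ := by linarith
  have hE : 0 < a₁ - a₀ := by linarith
  have hB : 0 < a₂ - a₁ := by linarith
  have hA : 0 < a₂ - a₀ := by linarith
  have hlam1 : lam ≤ a₁ := hlb.le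
  set D := Real.sqrt ((a₂ - a₀)*(a₂ - a₁)) with hD
  have hDpos : 0 < D := Real.sqrt_pos.2 (by positivity)
  set f : ℝ → ℝ := fun t => 1 / (Real.sqrt ((t - a₀) * (a₁ - t)) * (a₂ - t)) with hf
  set g : ℝ → ℝ := fun t => Real.sqrt t / (Real.sqrt ((t - a₀) * (a₁ - t)) * (a₂ - t)) with hg
  set w : ℝ → ℝ := fun s =>
    ((2*a₂ - a₀ - a₁)*s + (2*a₀*a₁ - a₂*a₀ - a₂*a₁)) / ((a₁ - a₀)*(a₂ - s)) with hw
  -- integrability of f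
  have hbase : IntervalIntegrable (fun x => (a₁ - x) ^ (-(1/2) : ℝ)) volume lam a₁ := by
    simpa using (intervalIntegral.intervalIntegrable_rpow' (a := a₁ - lam) (b := 0)
      (by norm_num : (-1:ℝ) < -(1/2))).comp_sub_left a₁
  have mden : Measurable fun t : ℝ => Real.sqrt ((t - a₀) * (a₁ - t)) * (a₂ - t) :=
    ((Real.continuous_sqrt.comp (by continuity)).mul (by continuity)).measurable
  have hmeas_f : AEStronglyMeasurable f (volume.restrict (Set.uIoc lam a₁)) :=
    (measurable_const.div mden).aestronglyMeasurable
  have hmeas_g : AEStronglyMeasurable g (volume.restrict (Set.uIoc lam a₁)) :=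
    (Real.continuous_sqrt.measurable.div mden).aestronglyMeasurable
  have huIoc : Set.uIoc lam a₁ = Ioc lam a₁ := uIoc_of_le hlam1
  have hint_f : IntervalIntegrable f volume lam a₁ := by
    apply (hbase.const_mul (1 / (Real.sqrt (lam - a₀) * (a₂ - a₁)))).mono_fun' hmeas_f
    rw [huIoc, Filter.EventuallyLE, ae_restrict_iff' measurableSet_Ioc]
    apply Eventually.of_forall
    intro t ht
    have ht0 : a₀ < t := lt_trans hla ht.1
    have ht2 : 0 < a₂ - t := by linarith [ht.2]
    have hfnn : 0 ≤ f t := by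
      simp only [hf]
      positivity
    rw [Real.norm_eq_abs, abs_of_nonneg hfnn]
    rcases eq_or_lt_of_le ht.2 with h | h
    · simp only [hf, h, sub_self, mul_zero, Real.sqrt_zero, zero_mul, one_div, inv_zero]
      rw [Real.rpow_neg le_rfl]
      positivity
    · have ha₁t : 0 < a₁ - t := by linarith
      have hrpow : (a₁ - t) ^ (-(1/2) : ℝ) = (Real.sqrt (a₁ - t))⁻¹ := by
        rw [Real.sqrt_eq_rpow, ← Real.rpow_neg ha₁t.le]
      have key : Real.sqrt (lam - a₀) * (a₂ - a₁) * Real.sqrt (a₁ - t)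
          ≤ Real.sqrt ((t - a₀) * (a₁ - t)) * (a₂ - t) := by
        rw [Real.sqrt_mul (by linarith : (0:ℝ) ≤ t - a₀)]
        have h1' : Real.sqrt (lam - a₀) ≤ Real.sqrt (t - a₀) :=
          Real.sqrt_le_sqrt (by linarith [ht.1])
        calc Real.sqrt (lam - a₀) * (a₂ - a₁) * Real.sqrt (a₁ - t)
            ≤ Real.sqrt (t - a₀) * (a₂ - t) * Real.sqrt (a₁ - t) := by
              apply mul_le_mul_of_nonneg_right _ (Real.sqrt_nonneg _)
              exact mul_le_mul h1' (by linarith) hB.le (Real.sqrt_nonneg _)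
          _ = Real.sqrt (t - a₀) * Real.sqrt (a₁ - t) * (a₂ - t) := by ring
      calc f t ≤ 1 / (Real.sqrt (lam - a₀) * (a₂ - a₁) * Real.sqrt (a₁ - t)) := by
            simp only [hf]
            exact one_div_le_one_div_of_le
              (mul_pos (mul_pos (Real.sqrt_pos.2 (by linarith)) hB)
                (Real.sqrt_pos.2 ha₁t)) key
        _ = 1 / (Real.sqrt (lam - a₀) * (a₂ - a₁)) * (a₁ - t) ^ (-(1/2) : ℝ) := by
            rw [hrpow, one_div, one_div, mul_inv]
  have hptwise : ∀ t ∈ Icc lam a₁, g t ≤ Real.sqrt a₁ * f t := by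
    intro t ht
    have ht0 : a₀ < t := lt_of_lt_of_le hla ht.1
    have ht2 : 0 < a₂ - t := by linarith [ht.2]
    simp only [hf, hg]
    rw [mul_one_div]
    rcases eq_or_lt_of_le ht.2 with h | h
    · simp [h]
    · have hden : 0 < Real.sqrt ((t - a₀) * (a₁ - t)) * (a₂ - t) := by
        apply mul_pos _ ht2
        apply Real.sqrt_pos.2
        exact mul_pos (by linarith) (by linarith)
      exact div_le_div_of_nonneg_right (Real.sqrt_le_sqrt ht.2) hden.le
  have hint_g : IntervalIntegrable g volume lam a₁ := by
    apply (hint_f.const_mul (Real.sqrt a₁)).mono_fun' hmeas_g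
    rw [huIoc, Filter.EventuallyLE, ae_restrict_iff' measurableSet_Ioc]
    apply Eventually.of_forall
    intro t ht
    have ht0 : a₀ < t := lt_trans hla ht.1
    have ht2 : 0 < a₂ - t := by linarith [ht.2]
    have hgnn : 0 ≤ g t := by
      simp only [hg]; positivity
    rw [Real.norm_eq_abs, abs_of_nonneg hgnn]
    exact hptwise t ⟨ht.1.le, ht.2⟩
  -- FTC
  have hcont : ContinuousOn (fun s => Real.arcsin (w s) / D) (Icc lam a₁) := by
    apply ContinuousOn.div_const
    apply Real.continuous_arcsin.comp_continuousOn
    apply ContinuousOn.div (by fun_prop) (by fun_prop)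
    intro t ht
    have : 0 < a₂ - t := by linarith [ht.2]
    exact (mul_pos hE this).ne'
  have hderiv : ∀ t ∈ Ioo lam a₁,
      HasDerivWithinAt (fun s => Real.arcsin (w s) / D) (f t) (Ioi t) t := by
    intro t ht
    exact (deriv_aux a₀ a₁ a₂ t h1 h2 (lt_trans hla ht.1) ht.2).hasDerivWithinAt
  have hkey : (∫ t in lam..a₁, f t) = Real.arcsin (w a₁) / D - Real.arcsin (w lam) / D :=
    intervalIntegral.integral_eq_sub_of_hasDeriv_right_of_le hlam1 hcont hderiv hint_f
  have hwa1 : w a₁ = 1 := by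
    simp only [hw]
    rw [div_eq_one_iff_eq (mul_pos hE hB).ne']
    ring
  have hwlam : -1 < w lam := by
    have hsq : 1 - w lam ^ 2
        = 4*((a₂ - a₀)*(a₂ - a₁))*((lam - a₀)*(a₁ - lam))/((a₁ - a₀)^2*(a₂ - lam)^2) :=
      wsq_aux a₀ a₁ a₂ lam hE.ne' (by linarith : (0:ℝ) < a₂ - lam).ne'
    have hpos : 0 < 1 - w lam ^ 2 := by
      rw [hsq]
      exact div_pos (mul_pos (mul_pos (by norm_num : (0:ℝ) < 4) (mul_pos hA hB))
          (mul_pos (by linarith) (by linarith)))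
        (mul_pos (pow_pos hE 2) (pow_pos (by linarith : (0:ℝ) < a₂ - lam) 2))
    have : w lam ^ 2 < 1 := by linarith
    rw [sq_lt_one_iff_abs_lt_one] at this
    linarith [abs_lt.1 this |>.1]
  have hflt : (∫ t in lam..a₁, f t) < π / D := by
    rw [hkey, hwa1, Real.arcsin_one]
    have harc : -(π/2) < Real.arcsin (w lam) := Real.neg_pi_div_two_lt_arcsin.2 hwlam
    have h3 : -(π/2)/D < Real.arcsin (w lam) / D := (div_lt_div_iff_of_pos_right hDpos).2 harc
    have heq : π/2/D + π/2/D = π/D := by ring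
    have heq2 : -(π/2)/D = -(π/2/D) := neg_div _ _
    linarith
  constructor
  · have hgle : (∫ t in lam..a₁, g t) ≤ Real.sqrt a₁ * ∫ t in lam..a₁, f t := by
      have := intervalIntegral.integral_mono_on hlam1 hint_g
        (hint_f.const_mul (Real.sqrt a₁)) hptwise
      rwa [intervalIntegral.integral_const_mul] at this
    have hsa₁ : 0 < Real.sqrt a₁ := Real.sqrt_pos.2 (by linarith)
    have hglt : (∫ t in lam..a₁, g t) < Real.sqrt a₁ * (π / D) :=
      lt_of_le_of_lt hgle (mul_lt_mul_of_pos_left hflt hsa₁)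
    have hC : 0 < Real.sqrt ((a₂ - a₀) * (a₂ - a₁) / a₂) / π :=
      div_pos (Real.sqrt_pos.2 (div_pos (mul_pos hA hB) ha₂)) Real.pi_pos
    calc (Real.sqrt ((a₂ - a₀) * (a₂ - a₁) / a₂) / π) * (∫ t in lam..a₁, g t)
        < (Real.sqrt ((a₂ - a₀) * (a₂ - a₁) / a₂) / π) * (Real.sqrt a₁ * (π / D)) :=
          mul_lt_mul_of_pos_left hglt hC
      _ = Real.sqrt (a₁ / a₂) := by
          rw [Real.sqrt_div (by positivity) a₂,
            Real.sqrt_div (by linarith : (0:ℝ) ≤ a₁) a₂, hD]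
          have h1' : Real.sqrt ((a₂ - a₀)*(a₂ - a₁)) ≠ 0 :=
            (Real.sqrt_pos.2 (by positivity)).ne'
          have h2' : Real.sqrt a₂ ≠ 0 := (Real.sqrt_pos.2 ha₂).ne'
          field_simp
  · rw [Real.sqrt_lt' one_pos, one_pow]
    exact (div_lt_one ha₂).2 h2
end

section
/- Let 0 < a₀ < a₁ < a₂. The function λ ↦ ∫_{a₁}^λ √s / (√((a₂-s)(s-a₁)) (s-a₀)) ds is strictly increasing on (a₁, a₂), tends to 0 as λ → a₁⁺, and for every λ ∈ (a₁, a₂) satisfies (√((a₂-a₀)(a₁-a₀)/a₀)/π) · ∫_{a₁}^λ √s/(√((a₂-s)(s-a₁))(s-a₀)) ds < √(a₂(a₂-a₀)/(a₀(a₁-a₀))). -/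
open Real Set Filter MeasureTheory

lemma aux_rpow_int (a b : ℝ) :
    IntervalIntegrable (fun x => (x - a) ^ (-1/2 : ℝ)) volume a b := by
  have h := intervalIntegral.intervalIntegrable_rpow' (a := 0) (b := b - a)
      (r := (-1/2 : ℝ)) (by norm_num)
  have h2 := h.comp_sub_right a
  simpa using h2

lemma aux_int_s12 {F : ℝ → ℝ} {a b C : ℝ} (hab : a ≤ b) (hm : Measurable F)
    (hb : ∀ s ∈ Set.Ioc a b, ‖F s‖ ≤ C * (s - a) ^ (-1/2 : ℝ)) :
    IntervalIntegrable F volume a b := by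
  have h1 : IntervalIntegrable (fun x => C * (x - a) ^ (-1/2 : ℝ)) volume a b :=
    (aux_rpow_int a b).const_mul C
  refine h1.mono_fun' hm.aestronglyMeasurable ?_
  rw [Filter.EventuallyLE, MeasureTheory.ae_restrict_iff' measurableSet_uIoc]
  filter_upwards with s hs
  rw [Set.uIoc_of_le hab] at hs
  exact hb s hs

lemma f_int {a₀ a₁ a₂ b : ℝ} (h0 : 0 < a₀) (h1 : a₀ < a₁) (hb : a₁ ≤ b) (hb2 : b < a₂) :
    IntervalIntegrable
      (fun s => Real.sqrt s / (Real.sqrt ((a₂ - s) * (s - a₁)) * (s - a₀))) volume a₁ b := by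
  apply aux_int_s12 (C := Real.sqrt a₂ / (Real.sqrt (a₂ - b) * (a₁ - a₀))) hb
  · exact (continuous_sqrt.measurable).div
      (((continuous_sqrt.comp (by continuity)).measurable).mul (by measurability))
  · intro s hs
    have hs1 : a₁ < s := hs.1
    have hs2 : s ≤ b := hs.2
    have hd1 : 0 < a₂ - s := by linarith
    have hd2 : 0 < s - a₁ := by linarith
    have hd3 : 0 < s - a₀ := by linarith
    have hsplit : Real.sqrt ((a₂ - s) * (s - a₁)) = Real.sqrt (a₂ - s) * Real.sqrt (s - a₁) :=
      Real.sqrt_mul hd1.le _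
    have hnn : 0 ≤ Real.sqrt s / (Real.sqrt ((a₂ - s) * (s - a₁)) * (s - a₀)) :=
      div_nonneg (Real.sqrt_nonneg _) (mul_nonneg (Real.sqrt_nonneg _) hd3.le)
    rw [Real.norm_of_nonneg hnn, hsplit]
    have hrpow : (s - a₁) ^ (-1/2 : ℝ) = (Real.sqrt (s - a₁))⁻¹ := by
      rw [show (-1/2 : ℝ) = -(1/2) by norm_num, Real.rpow_neg hd2.le, ← Real.sqrt_eq_rpow]
    rw [hrpow]
    have h4 : (0:ℝ) < Real.sqrt (a₂ - b) := Real.sqrt_pos.mpr (by linarith)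
    have h5 : (0:ℝ) < Real.sqrt (s - a₁) := Real.sqrt_pos.mpr hd2
    have h6 : (0:ℝ) < a₁ - a₀ := by linarith
    calc Real.sqrt s / (Real.sqrt (a₂ - s) * Real.sqrt (s - a₁) * (s - a₀))
        ≤ Real.sqrt a₂ / (Real.sqrt (a₂ - b) * Real.sqrt (s - a₁) * (a₁ - a₀)) := by
          gcongr <;> linarith
      _ = Real.sqrt a₂ / (Real.sqrt (a₂ - b) * (a₁ - a₀)) * (Real.sqrt (s - a₁))⁻¹ := by
          field_simp

lemma g_int {a₁ a₂ b : ℝ} (hb : a₁ ≤ b) (hb2 : b < a₂) :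
    IntervalIntegrable (fun s => 1 / Real.sqrt ((a₂ - s) * (s - a₁))) volume a₁ b := by
  apply aux_int_s12 (C := 1 / Real.sqrt (a₂ - b)) hb
  · exact measurable_const.div (continuous_sqrt.comp (by continuity)).measurable
  · intro s hs
    have hs1 : a₁ < s := hs.1
    have hs2 : s ≤ b := hs.2
    have hd1 : 0 < a₂ - s := by linarith
    have hd2 : 0 < s - a₁ := by linarith
    have hsplit : Real.sqrt ((a₂ - s) * (s - a₁)) = Real.sqrt (a₂ - s) * Real.sqrt (s - a₁) :=
      Real.sqrt_mul hd1.le _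
    have hnn : 0 ≤ 1 / Real.sqrt ((a₂ - s) * (s - a₁)) := by positivity
    rw [Real.norm_of_nonneg hnn, hsplit]
    have hrpow : (s - a₁) ^ (-1/2 : ℝ) = (Real.sqrt (s - a₁))⁻¹ := by
      rw [show (-1/2 : ℝ) = -(1/2) by norm_num, Real.rpow_neg hd2.le, ← Real.sqrt_eq_rpow]
    rw [hrpow]
    have h4 : (0:ℝ) < Real.sqrt (a₂ - b) := Real.sqrt_pos.mpr (by linarith)
    have h5 : (0:ℝ) < Real.sqrt (s - a₁) := Real.sqrt_pos.mpr hd2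
    calc 1 / (Real.sqrt (a₂ - s) * Real.sqrt (s - a₁))
        ≤ 1 / (Real.sqrt (a₂ - b) * Real.sqrt (s - a₁)) := by
          gcongr
          all_goals exact Real.sqrt_le_sqrt (by linarith)
      _ = 1 / Real.sqrt (a₂ - b) * (Real.sqrt (s - a₁))⁻¹ := by
          field_simp

lemma g_eval {a₁ a₂ lam : ℝ} (hl : a₁ < lam) (hl2 : lam < a₂) :
    ∫ s in a₁..lam, 1 / Real.sqrt ((a₂ - s) * (s - a₁)) < π := by
  have hd : (0:ℝ) < a₂ - a₁ := by linarith
  set G : ℝ → ℝ := fun s => Real.arcsin ((2*s - a₁ - a₂)/(a₂ - a₁)) with hG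
  have hcont : ContinuousOn G (Set.Icc a₁ lam) :=
    (Real.continuous_arcsin.comp (by continuity)).continuousOn
  have hderiv : ∀ s ∈ Set.Ioo a₁ lam,
      HasDerivWithinAt G (1 / Real.sqrt ((a₂ - s) * (s - a₁))) (Set.Ioi s) s := by
    intro s hs
    have hs1 : a₁ < s := hs.1
    have hs2 : s < a₂ := lt_trans hs.2 hl2
    have hu1 : (-1:ℝ) < (2*s - a₁ - a₂)/(a₂ - a₁) := by
      rw [lt_div_iff₀ hd]; linarith
    have hu2 : (2*s - a₁ - a₂)/(a₂ - a₁) < 1 := by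
      rw [div_lt_one hd]; linarith
    have hu : HasDerivAt (fun s : ℝ => (2*s - a₁ - a₂)/(a₂ - a₁)) (2/(a₂ - a₁)) s := by
      have h := (((hasDerivAt_id s).const_mul 2).sub_const a₁).sub_const a₂
      simpa using h.div_const (a₂ - a₁)
    have harc := (Real.hasDerivAt_arcsin hu1.ne' hu2.ne).comp s hu
    have hP : (0:ℝ) < (a₂ - s) * (s - a₁) := mul_pos (by linarith) (by linarith)
    have hsq : Real.sqrt (1 - ((2*s - a₁ - a₂)/(a₂ - a₁))^2)
        = 2 * Real.sqrt ((a₂ - s) * (s - a₁)) / (a₂ - a₁) := by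
      rw [show 1 - ((2*s - a₁ - a₂)/(a₂ - a₁))^2
          = (2/(a₂ - a₁))^2 * ((a₂ - s) * (s - a₁)) by field_simp; ring,
        Real.sqrt_mul (by positivity), Real.sqrt_sq (by positivity)]
      ring
    have hval : 1 / Real.sqrt (1 - ((2*s - a₁ - a₂)/(a₂ - a₁))^2) * (2/(a₂ - a₁))
        = 1 / Real.sqrt ((a₂ - s) * (s - a₁)) := by
      rw [hsq]
      have hR : Real.sqrt ((a₂ - s) * (s - a₁)) ≠ 0 := by positivity
      field_simp
    have H : HasDerivAt G (1 / Real.sqrt ((a₂ - s) * (s - a₁))) s := by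
      rw [← hval]; exact harc
    exact H.hasDerivWithinAt
  have hint := g_int (a₁ := a₁) (a₂ := a₂) hl.le hl2
  have key := intervalIntegral.integral_eq_sub_of_hasDeriv_right_of_le hl.le hcont hderiv hint
  rw [key]
  have hGa : G a₁ = -(π/2) := by
    have : (2*a₁ - a₁ - a₂)/(a₂ - a₁) = -1 := by
      rw [div_eq_iff hd.ne']; ring
    rw [hG]; simp only; rw [this, Real.arcsin_neg_one]
  have hGl : G lam < π/2 := by
    apply Real.arcsin_lt_pi_div_two.mpr
    rw [div_lt_one hd]; linarith
  rw [hGa]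
  linarith

theorem stmt12 (a₀ a₁ a₂ : ℝ) (h0 : 0 < a₀) (h1 : a₀ < a₁) (h2 : a₁ < a₂) :
    StrictMonoOn
        (fun lam => ∫ s in a₁..lam,
          Real.sqrt s / (Real.sqrt ((a₂ - s) * (s - a₁)) * (s - a₀)))
        (Set.Ioo a₁ a₂)
    ∧ Filter.Tendsto
        (fun lam => ∫ s in a₁..lam,
          Real.sqrt s / (Real.sqrt ((a₂ - s) * (s - a₁)) * (s - a₀)))
        (nhdsWithin a₁ (Set.Ioi a₁)) (nhds 0)
    ∧ ∀ lam ∈ Set.Ioo a₁ a₂,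
        (Real.sqrt ((a₂ - a₀) * (a₁ - a₀) / a₀) / π) *
            (∫ s in a₁..lam,
              Real.sqrt s / (Real.sqrt ((a₂ - s) * (s - a₁)) * (s - a₀)))
          < Real.sqrt (a₂ * (a₂ - a₀) / (a₀ * (a₁ - a₀))) := by
  refine ⟨?_, ?_, ?_⟩
  · intro x hx y hy hxy
    dsimp only
    have hix : IntervalIntegrable
        (fun s => Real.sqrt s / (Real.sqrt ((a₂ - s) * (s - a₁)) * (s - a₀))) volume a₁ x :=
      f_int h0 h1 hx.1.le hx.2
    have hcont : ContinuousOn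
        (fun s => Real.sqrt s / (Real.sqrt ((a₂ - s) * (s - a₁)) * (s - a₀))) (Set.Icc x y) := by
      apply ContinuousOn.div
      · exact continuous_sqrt.continuousOn
      · exact ((continuous_sqrt.comp (by continuity)).mul (by continuity)).continuousOn
      · intro s hs
        have h1s : a₁ < s := lt_of_lt_of_le hx.1 hs.1
        have h2s : s < a₂ := lt_of_le_of_lt hs.2 hy.2
        have hpos : (0:ℝ) < Real.sqrt ((a₂ - s) * (s - a₁)) :=
          Real.sqrt_pos.mpr (mul_pos (by linarith) (by linarith))
        exact ne_of_gt (mul_pos hpos (by linarith))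
    have hixy : IntervalIntegrable
        (fun s => Real.sqrt s / (Real.sqrt ((a₂ - s) * (s - a₁)) * (s - a₀))) volume x y := by
      apply ContinuousOn.intervalIntegrable
      rwa [Set.uIcc_of_le hxy.le]
    have hsum := intervalIntegral.integral_add_adjacent_intervals hix hixy
    have hpos : 0 < ∫ s in x..y,
        Real.sqrt s / (Real.sqrt ((a₂ - s) * (s - a₁)) * (s - a₀)) := by
      apply intervalIntegral.intervalIntegral_pos_of_pos_on hixy _ hxy
      intro s hs
      have h1s : a₁ < s := lt_trans hx.1 hs.1
      have h2s : s < a₂ := lt_trans hs.2 hy.2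
      exact div_pos (Real.sqrt_pos.mpr (by linarith))
        (mul_pos (Real.sqrt_pos.mpr (mul_pos (by linarith) (by linarith))) (by linarith))
    linarith [hsum]
  · have hb1 : a₁ < (a₁ + a₂)/2 := by linarith
    have hb2 : (a₁ + a₂)/2 < a₂ := by linarith
    have hi := f_int h0 h1 hb1.le hb2
    have hc := intervalIntegral.continuousOn_primitive_interval' hi Set.left_mem_uIcc
    have hc2 := hc a₁ Set.left_mem_uIcc
    rw [ContinuousWithinAt, intervalIntegral.integral_same] at hc2
    refine hc2.mono_left ?_
    rw [← nhdsWithin_Ioc_eq_nhdsGT hb1]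
    apply nhdsWithin_mono
    rw [Set.uIcc_of_le hb1.le]
    exact Set.Ioc_subset_Icc_self
  · intro lam hlam
    have hl1 : a₁ < lam := hlam.1
    have hl2 : lam < a₂ := hlam.2
    set c : ℝ := Real.sqrt a₂ / (a₁ - a₀) with hc
    have hc0 : 0 < c := div_pos (Real.sqrt_pos.mpr (by linarith)) (by linarith)
    have hfi := f_int h0 h1 hl1.le hl2
    have hgi := (g_int hl1.le hl2).const_mul c
    have hmono : (∫ s in a₁..lam,
          Real.sqrt s / (Real.sqrt ((a₂ - s) * (s - a₁)) * (s - a₀)))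
        ≤ ∫ s in a₁..lam, c * (1 / Real.sqrt ((a₂ - s) * (s - a₁))) := by
      apply intervalIntegral.integral_mono_on hl1.le hfi hgi
      intro s hs
      rcases eq_or_lt_of_le hs.1 with h | h
      · rw [← h]
        simp
      · have hd1 : 0 < a₂ - s := by linarith [hs.2]
        have hd2 : 0 < s - a₁ := by linarith
        have h4 : (0:ℝ) < Real.sqrt (a₂ - s) := Real.sqrt_pos.mpr hd1
        have h5 : (0:ℝ) < Real.sqrt (s - a₁) := Real.sqrt_pos.mpr hd2
        have h6 : (0:ℝ) < a₁ - a₀ := by linarith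
        rw [Real.sqrt_mul hd1.le]
        calc Real.sqrt s / (Real.sqrt (a₂ - s) * Real.sqrt (s - a₁) * (s - a₀))
            ≤ Real.sqrt a₂ / (Real.sqrt (a₂ - s) * Real.sqrt (s - a₁) * (a₁ - a₀)) := by
              gcongr <;> linarith
          _ = c * (1 / (Real.sqrt (a₂ - s) * Real.sqrt (s - a₁))) := by
              rw [hc]; field_simp
    rw [intervalIntegral.integral_const_mul] at hmono
    have hglt := g_eval hl1 hl2
    have hcoefpos : 0 < Real.sqrt ((a₂ - a₀) * (a₁ - a₀) / a₀) :=
      Real.sqrt_pos.mpr (div_pos (mul_pos (by linarith) (by linarith)) h0)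
    have hπ : 0 < π := Real.pi_pos
    have hkey : Real.sqrt ((a₂ - a₀) * (a₁ - a₀) / a₀) * c
        = Real.sqrt (a₂ * (a₂ - a₀) / (a₀ * (a₁ - a₀))) := by
      have h7 : c = Real.sqrt (a₂ / (a₁ - a₀)^2) := by
        rw [Real.sqrt_div (by linarith : (0:ℝ) ≤ a₂), Real.sqrt_sq (by linarith)]
      rw [h7, ← Real.sqrt_mul (div_nonneg (mul_nonneg (by linarith) (by linarith)) h0.le)]
      congr 1
      have h8 : a₀ ≠ 0 := h0.ne'
      have h9 : a₁ - a₀ ≠ 0 := by linarith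
      field_simp
    calc (Real.sqrt ((a₂ - a₀) * (a₁ - a₀) / a₀) / π) *
            (∫ s in a₁..lam,
              Real.sqrt s / (Real.sqrt ((a₂ - s) * (s - a₁)) * (s - a₀)))
        ≤ (Real.sqrt ((a₂ - a₀) * (a₁ - a₀) / a₀) / π) *
            (c * ∫ s in a₁..lam, 1 / Real.sqrt ((a₂ - s) * (s - a₁))) := by
          apply mul_le_mul_of_nonneg_left hmono (by positivity)
      _ < (Real.sqrt ((a₂ - a₀) * (a₁ - a₀) / a₀) / π) * (c * π) := by
          apply mul_lt_mul_of_pos_left (mul_lt_mul_of_pos_left hglt hc0) (by positivity)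
      _ = Real.sqrt ((a₂ - a₀) * (a₁ - a₀) / a₀) * c := by
          field_simp
      _ = Real.sqrt (a₂ * (a₂ - a₀) / (a₀ * (a₁ - a₀))) := hkey
end

section
/- Let 0 < a₀ < a₁ < a₂. Then (√((a₂-a₀)(a₁-a₀)/a₀)/π) · ∫_{a₁}^{a₂} √s/(√((a₂-s)(s-a₁))(s-a₀)) ds > √(a₁(a₁-a₀)/(a₀(a₂-a₀))). -/
open Real Set Filter MeasureTheory

theorem stmt13 (a₀ a₁ a₂ : ℝ) (h0 : 0 < a₀) (h1 : a₀ < a₁) (h2 : a₁ < a₂) :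
    Real.sqrt (a₁ * (a₁ - a₀) / (a₀ * (a₂ - a₀)))
      < (Real.sqrt ((a₂ - a₀) * (a₁ - a₀) / a₀) / π) *
          ∫ s in a₁..a₂, Real.sqrt s / (Real.sqrt ((a₂ - s) * (s - a₁)) * (s - a₀)) := by
  have hb : (0:ℝ) < a₂ - a₁ := by linarith
  have hpi : (0:ℝ) < π := Real.pi_pos
  set F : ℝ → ℝ := fun s => Real.sqrt s / (Real.sqrt ((a₂ - s) * (s - a₁)) * (s - a₀)) with hFdef
  set φ : ℝ → ℝ := fun θ => a₁ + (a₂ - a₁) * Real.sin θ ^ 2 with hφdef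
  set φ' : ℝ → ℝ := fun θ => (a₂ - a₁) * (2 * Real.sin θ * Real.cos θ) with hφ'def
  set G : ℝ → ℝ := fun θ => 2 * Real.sqrt (φ θ) / (φ θ - a₀) with hGdef
  -- derivative of φ
  have hderiv : ∀ θ, HasDerivAt φ (φ' θ) θ := by
    intro θ
    have h := (((Real.hasDerivAt_sin θ).pow 2).const_mul (a₂ - a₁)).const_add a₁
    convert h using 1
    · rfl
    · rfl
    · rfl
    simp only [hφ'def]
    ring
  -- φ is strictly monotone on [0, π/2]
  have hmono : StrictMonoOn φ (Icc 0 (π/2)) := by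
    intro x hx y hy hxy
    have hx1 : -(π/2) ≤ x := by linarith [hx.1]
    have hy1 : -(π/2) ≤ y := by linarith [hy.1]
    have hsx : 0 ≤ Real.sin x := Real.sin_nonneg_of_nonneg_of_le_pi hx.1 (by linarith [hx.2])
    have hs : Real.sin x < Real.sin y :=
      Real.strictMonoOn_sin ⟨hx1, hx.2⟩ ⟨hy1, hy.2⟩ hxy
    have : Real.sin x ^ 2 < Real.sin y ^ 2 := by nlinarith
    simp only [hφdef]
    nlinarith
  have hinj : InjOn φ (Ioo 0 (π/2)) :=
    (hmono.injOn).mono Ioo_subset_Icc_self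
  have hcontφ : Continuous φ := by
    apply continuous_const.add (continuous_const.mul ((Real.continuous_sin).pow 2))
  -- bounds on φ on the open interval
  have hφbound : ∀ θ ∈ Ioo (0:ℝ) (π/2), a₁ < φ θ ∧ φ θ < a₂ := by
    intro θ hθ
    have hs : 0 < Real.sin θ := Real.sin_pos_of_pos_of_lt_pi hθ.1 (by linarith [hθ.2])
    have hc : 0 < Real.cos θ := Real.cos_pos_of_mem_Ioo ⟨by linarith [hθ.1], hθ.2⟩
    have hsq : Real.sin θ ^ 2 + Real.cos θ ^ 2 = 1 := Real.sin_sq_add_cos_sq θ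
    have hs2 : 0 < Real.sin θ ^ 2 := by positivity
    have hc2 : 0 < Real.cos θ ^ 2 := by positivity
    constructor
    · simp only [hφdef]; nlinarith
    · simp only [hφdef]; nlinarith
  -- image of the open interval
  have himage : φ '' Ioo 0 (π/2) = Ioo a₁ a₂ := by
    apply Subset.antisymm
    · rintro _ ⟨θ, hθ, rfl⟩
      exact hφbound θ hθ
    · have h0' : φ 0 = a₁ := by simp [hφdef]
      have h2' : φ (π/2) = a₂ := by simp [hφdef, Real.sin_pi_div_two]
      have := intermediate_value_Ioo (by positivity : (0:ℝ) ≤ π/2) hcontφ.continuousOn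
      rw [h0', h2'] at this
      exact this
  -- change of variables
  have hCV : ∫ s in Ioo a₁ a₂, F s = ∫ θ in Ioo 0 (π/2), |φ' θ| • F (φ θ) := by
    rw [← himage]
    exact integral_image_eq_integral_abs_deriv_smul measurableSet_Ioo
      (fun x _ => (hderiv x).hasDerivWithinAt) hinj F
  -- simplify integrand on the open interval
  have hsimp : ∀ θ ∈ Ioo (0:ℝ) (π/2), |φ' θ| • F (φ θ) = G θ := by
    intro θ hθ
    have hs : 0 < Real.sin θ := Real.sin_pos_of_pos_of_lt_pi hθ.1 (by linarith [hθ.2])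
    have hc : 0 < Real.cos θ := Real.cos_pos_of_mem_Ioo ⟨by linarith [hθ.1], hθ.2⟩
    have hsq : Real.sin θ ^ 2 + Real.cos θ ^ 2 = 1 := Real.sin_sq_add_cos_sq θ
    obtain ⟨hlo, hhi⟩ := hφbound θ hθ
    have hd : 0 < φ θ - a₀ := by linarith
    have hprod : (a₂ - φ θ) * (φ θ - a₁) = ((a₂ - a₁) * Real.sin θ * Real.cos θ) ^ 2 := by
      simp only [hφdef]
      linear_combination (-(a₂ - a₁)^2 * Real.sin θ ^ 2) * hsq
    have hsqrt : Real.sqrt ((a₂ - φ θ) * (φ θ - a₁))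
        = (a₂ - a₁) * Real.sin θ * Real.cos θ := by
      rw [hprod, Real.sqrt_sq (by positivity)]
    have habs : |φ' θ| = (a₂ - a₁) * (2 * Real.sin θ * Real.cos θ) := by
      simp only [hφ'def]
      exact abs_of_pos (by positivity)
    simp only [smul_eq_mul, hFdef, hGdef, hsqrt, habs]
    field_simp
  have hIoo : ∫ θ in Ioo 0 (π/2), |φ' θ| • F (φ θ) = ∫ θ in Ioo (0:ℝ) (π/2), G θ :=
    setIntegral_congr_fun measurableSet_Ioo hsimp
  -- express as interval integrals
  have hI1 : ∫ s in a₁..a₂, F s = ∫ s in Ioo a₁ a₂, F s := by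
    rw [intervalIntegral.integral_of_le h2.le, MeasureTheory.integral_Ioc_eq_integral_Ioo]
  have hI2 : ∫ θ in (0:ℝ)..(π/2), G θ = ∫ θ in Ioo (0:ℝ) (π/2), G θ := by
    rw [intervalIntegral.integral_of_le (by positivity), MeasureTheory.integral_Ioc_eq_integral_Ioo]
  have hIeq : ∫ s in a₁..a₂, F s = ∫ θ in (0:ℝ)..(π/2), G θ := by
    rw [hI1, hCV, hIoo, hI2]
  -- strict lower bound for the θ-integral
  have hφge : ∀ θ, a₁ ≤ φ θ := by
    intro θ; simp only [hφdef]; nlinarith [sq_nonneg (Real.sin θ)]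
  have hφle : ∀ θ, φ θ ≤ a₂ := by
    intro θ; simp only [hφdef]; nlinarith [Real.sin_sq_le_one θ]
  have hGcont : Continuous G := by
    apply Continuous.div (continuous_const.mul (hcontφ.sqrt)) (hcontφ.sub continuous_const)
    intro θ
    have := hφge θ
    intro h; linarith [sub_eq_zero.mp h]
  set c : ℝ := 2 * Real.sqrt a₁ / (a₂ - a₀) with hcdef
  have hle : ∀ θ ∈ Ioc (0:ℝ) (π/2), c ≤ G θ := by
    intro θ _
    have h₁ : Real.sqrt a₁ ≤ Real.sqrt (φ θ) := Real.sqrt_le_sqrt (hφge θ)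
    have h₂ : φ θ - a₀ ≤ a₂ - a₀ := by linarith [hφle θ]
    have h₃ : 0 < φ θ - a₀ := by linarith [hφge θ]
    exact div_le_div₀ (by positivity) (by linarith) h₃ h₂
  have hlt : ∃ θ ∈ Icc (0:ℝ) (π/2), c < G θ := by
    refine ⟨π/4, ⟨by positivity, by linarith [hpi]⟩, ?_⟩
    have hmem : π/4 ∈ Ioo (0:ℝ) (π/2) := ⟨by positivity, by linarith [hpi]⟩
    obtain ⟨hlo, hhi⟩ := hφbound _ hmem
    have h₁ : Real.sqrt a₁ < Real.sqrt (φ (π/4)) := Real.sqrt_lt_sqrt (by linarith) hlo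
    have h₃ : 0 < φ (π/4) - a₀ := by linarith
    simp only [hcdef, hGdef]
    exact div_lt_div₀ (by linarith) (by linarith) (by positivity) h₃
  have hkey : (π/2) * c < ∫ s in a₁..a₂, F s := by
    rw [hIeq]
    have h' := intervalIntegral.integral_lt_integral_of_continuousOn_of_le_of_exists_lt
      (f := fun _ => c) (by positivity : (0:ℝ) < π/2) continuousOn_const
      hGcont.continuousOn hle hlt
    rwa [intervalIntegral.integral_const, smul_eq_mul, sub_zero] at h'
  -- conclude
  have h20 : (0:ℝ) < a₂ - a₀ := by linarith
  have h10 : (0:ℝ) < a₁ - a₀ := by linarith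
  set K : ℝ := Real.sqrt ((a₂ - a₀) * (a₁ - a₀) / a₀) with hKdef
  have hKpos : 0 < K := Real.sqrt_pos.mpr (div_pos (mul_pos h20 h10) h0)
  have h20' : a₂ - a₀ ≠ 0 := ne_of_gt h20
  have ha0' : a₀ ≠ 0 := ne_of_gt h0
  have hπ' : π ≠ 0 := ne_of_gt hpi
  have hfinal : (K / π) * ((π/2) * c) = Real.sqrt (a₁ * (a₁ - a₀) / (a₀ * (a₂ - a₀))) := by
    have h1 : a₁ * (a₁ - a₀) / (a₀ * (a₂ - a₀))
        = ((a₂ - a₀) * (a₁ - a₀) / a₀) * a₁ / (a₂ - a₀)^2 := by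
      field_simp
    have hXnn : (0:ℝ) ≤ (a₂ - a₀) * (a₁ - a₀) / a₀ :=
      le_of_lt (div_pos (mul_pos h20 h10) h0)
    rw [h1, Real.sqrt_div (by nlinarith [Real.sqrt_nonneg a₁] : (0:ℝ) ≤ ((a₂ - a₀) * (a₁ - a₀) / a₀) * a₁),
      Real.sqrt_mul hXnn, Real.sqrt_sq (le_of_lt h20)]
    simp only [hcdef, hKdef]
    field_simp
  calc Real.sqrt (a₁ * (a₁ - a₀) / (a₀ * (a₂ - a₀))) = (K / π) * ((π/2) * c) := hfinal.symm
    _ < (K / π) * ∫ s in a₁..a₂, F s := by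
        exact mul_lt_mul_of_pos_left hkey (div_pos hKpos hpi)
end
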